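/- arXiv:1109.5309 — 9 statements merged into one kernel-verified Lean document; each statement's English description precedes it below -/
import Mathlib

section
/- Let B ⊆ ℝ be a Borel set of Lebesgue measure zero and μ a translation invariant Borel measure on ℝ for which B has positive σ-finite measure. Then μ(B ∩ (B + t)) = 0 for Lebesgue-almost every t ∈ ℝ. -/
open MeasureTheory Set Filter Metric
open scoped ENNReal Pointwise Topology

/-- `B` is σ-finite for `μ`: `B` is a countable union of measurable sets of finite measure. -/
def SigmaFiniteOn (μ : Measure ℝ) (B : Set ℝ) : Prop :=
  ∃ s : ℕ → Set ℝ, (∀ n, MeasurableSet (s n)) ∧ (∀ n, μ (s n) < ⊤) ∧ B = ⋃ n, s n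

/-- `μ` is a translation invariant Borel measure on `ℝ`. -/
def TransInv (μ : Measure ℝ) : Prop :=
  ∀ (A : Set ℝ), MeasurableSet A → ∀ t : ℝ, μ ((· + t) '' A) = μ A
theorem stmt1 (B : Set ℝ) (hB : MeasurableSet B) (hB0 : volume B = 0)
    (μ : Measure ℝ) (hμ : TransInv μ) (hpos : 0 < μ B) (hsf : SigmaFiniteOn μ B) :
    ∀ᵐ t ∂(volume : Measure ℝ), μ (B ∩ ((· + t) '' B)) = 0 := by
  classical
  set ν : Measure ℝ := μ.restrict B with hν
  obtain ⟨s, hsm, hsfin, hsB⟩ := hsf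
  -- ν is σ-finite
  have : SigmaFinite ν := by
    refine ⟨⟨⟨fun n => Nat.casesOn n Bᶜ s, fun _ => trivial, ?_, ?_⟩⟩⟩
    · rintro (_ | n)
      · show μ.restrict B Bᶜ < ⊤
        rw [Measure.restrict_apply hB.compl, compl_inter_self]
        simp
      · show μ.restrict B (s n) < ⊤
        calc μ.restrict B (s n) ≤ μ (s n) := Measure.restrict_le_self _
          _ < ⊤ := hsfin n
    · apply eq_univ_of_forall
      intro x
      by_cases hx : x ∈ B
      · rw [hsB] at hx
        obtain ⟨n, hn⟩ := mem_iUnion.mp hx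
        exact mem_iUnion.mpr ⟨n + 1, hn⟩
      · exact mem_iUnion.mpr ⟨0, hx⟩
  set S : Set (ℝ × ℝ) := {p : ℝ × ℝ | p.2 - p.1 ∈ B} with hS
  have hSm : MeasurableSet S := (measurable_snd.sub measurable_fst) hB
  have himg : ∀ t : ℝ, (· + t) '' B = {x : ℝ | x - t ∈ B} := by
    intro t
    ext x
    constructor
    · rintro ⟨b, hb, rfl⟩; simpa using hb
    · intro hx; exact ⟨x - t, hx, by ring⟩
  have hkey : ∀ t : ℝ, μ (B ∩ ((· + t) '' B)) = ν (Prod.mk t ⁻¹' S) := by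
    intro t
    have h1 : Prod.mk t ⁻¹' S = {x : ℝ | x - t ∈ B} := rfl
    rw [h1, hν, Measure.restrict_apply' hB, ← himg t, inter_comm]
  have hmeas : Measurable fun t => ν (Prod.mk t ⁻¹' S) :=
    measurable_measure_prodMk_left hSm
  have hint : ∫⁻ t, ν (Prod.mk t ⁻¹' S) ∂(volume : Measure ℝ) = 0 := by
    rw [← Measure.prod_apply hSm, Measure.prod_apply_symm hSm]
    have : ∀ x : ℝ, (volume : Measure ℝ) ((fun t => (t, x)) ⁻¹' S) = 0 := by
      intro x
      have hpre : (fun t => (t, x)) ⁻¹' S = (fun t => x - t) ⁻¹' B := rfl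
      rw [hpre, (Measure.measurePreserving_sub_left (volume : Measure ℝ) x).measure_preimage
        hB.nullMeasurableSet]
      exact hB0
    simp [this]
  have h0 : ∀ᵐ t ∂(volume : Measure ℝ), ν (Prod.mk t ⁻¹' S) = 0 :=
    (lintegral_eq_zero_iff hmeas).mp hint
  filter_upwards [h0] with t ht
  rw [hkey t, ht]
end

section
/- Let B ⊆ ℝ be a Borel set of Lebesgue measure zero and μ a translation invariant Borel measure on ℝ for which B has positive σ-finite measure. Then there exists a Borel set B' ⊆ B with μ(B') > 0 such that the difference set B' − B' has empty interior. -/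
open MeasureTheory Set Filter Metric
open scoped ENNReal Pointwise Topology

theorem stmt2 (B : Set ℝ) (hB : MeasurableSet B) (hB0 : volume B = 0)
    (μ : Measure ℝ) (hμ : TransInv μ) (hpos : 0 < μ B) (hsf : SigmaFiniteOn μ B) :
    ∃ B' : Set ℝ, B' ⊆ B ∧ MeasurableSet B' ∧ 0 < μ B' ∧ interior (B' - B') = ∅ := by
  classical
  obtain ⟨s, hsm, hsfin, hsB⟩ := hsf
  -- find a piece of positive finite measure
  have hex : ∃ n, 0 < μ (s n) := by
    by_contra h
    push_neg at h
    have : μ B = 0 := by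
      rw [hsB]
      exact measure_iUnion_null fun n => le_antisymm (h n) zero_le
    exact hpos.ne' this
  obtain ⟨n, hn⟩ := hex
  set A : Set ℝ := s n with hA
  have hAm : MeasurableSet A := hsm n
  have hAB : A ⊆ B := hsB ▸ subset_iUnion s n
  have hAfin : μ A < ⊤ := hsfin n
  have hA0 : volume A = 0 := le_antisymm (hB0 ▸ measure_mono hAB) zero_le
  set ν : Measure ℝ := μ.restrict A with hν
  haveI : IsFiniteMeasure ν := ⟨by
    rw [hν, Measure.restrict_apply_univ]; exact hAfin⟩
  -- F t = μ (A ∩ (· + t) '' A)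
  set F : ℝ → ℝ≥0∞ := fun t => ν ((fun a => a - t) ⁻¹' A) with hF
  have himg : ∀ t : ℝ, (fun a => a + t) '' A = (fun a => a - t) ⁻¹' A := by
    intro t
    ext x
    simp only [Set.mem_image, Set.mem_preimage]
    constructor
    · rintro ⟨a, ha, rfl⟩; simpa using ha
    · intro hx; exact ⟨x - t, hx, by ring⟩
  have hFmeas : Measurable F := by
    have hs : MeasurableSet {p : ℝ × ℝ | p.2 - p.1 ∈ A} :=
      (measurable_snd.sub measurable_fst) hAm
    have h1 : Measurable (fun t : ℝ => ν (Prod.mk t ⁻¹' {p : ℝ × ℝ | p.2 - p.1 ∈ A})) :=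
      measurable_measure_prodMk_left hs
    have heq : F = fun t : ℝ => ν (Prod.mk t ⁻¹' {p : ℝ × ℝ | p.2 - p.1 ∈ A}) := rfl
    rw [heq]
    exact h1
  -- indicator function
  set g : ℝ → ℝ≥0∞ := A.indicator 1 with hg
  have hgmeas : Measurable g := measurable_const.indicator hAm
  have hFrep : ∀ t, F t = ∫⁻ x, g (x - t) ∂ν := by
    intro t
    have hms : MeasurableSet ((fun a => a - t) ⁻¹' A) := (measurable_sub_const t) hAm
    show ν ((fun a => a - t) ⁻¹' A) = _
    rw [← lintegral_indicator_one hms]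
    exact lintegral_congr fun x => by simp [hg, Set.indicator_apply, Set.mem_preimage]
  have hswap : ∫⁻ t, F t ∂volume = 0 := by
    have hfm : AEMeasurable (Function.uncurry fun (t x : ℝ) => g (x - t))
        (volume.prod ν) :=
      (hgmeas.comp (measurable_snd.sub measurable_fst)).aemeasurable
    calc ∫⁻ t, F t ∂volume = ∫⁻ t, ∫⁻ x, g (x - t) ∂ν ∂volume := by
          simp only [hFrep]
      _ = ∫⁻ x, ∫⁻ t, g (x - t) ∂volume ∂ν := lintegral_lintegral_swap hfm
      _ = ∫⁻ x, (0 : ℝ≥0∞) ∂ν := by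
          refine lintegral_congr fun x => ?_
          have hmp : MeasurePreserving (fun t : ℝ => x - t) volume volume :=
            Measure.measurePreserving_sub_left volume x
          rw [hmp.lintegral_comp hgmeas]
          rw [hg, lintegral_indicator_one hAm]
          exact hA0
      _ = 0 := lintegral_zero
  have hae : ∀ᵐ t ∂(volume : Measure ℝ), F t = 0 :=
    (lintegral_eq_zero_iff hFmeas).mp hswap
  -- the set where F = 0 is dense
  have hdense : Dense {t : ℝ | F t = 0} := by
    intro x
    rw [_root_.mem_closure_iff]
    intro V hV hxV
    by_contra h
    push_neg at h
    have hsub : V ⊆ {t : ℝ | F t ≠ 0} := fun t ht ht0 =>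
      (Set.eq_empty_iff_forall_notMem.mp h t) (Set.mem_inter ht ht0)
    have hVnull : volume V = 0 :=
      le_antisymm (le_trans (measure_mono hsub) (le_of_eq (ae_iff.mp hae))) zero_le
    exact absurd hVnull (hV.measure_pos volume ⟨x, hxV⟩).ne'
  obtain ⟨C, hCsub, hCcnt, hCdense⟩ := hdense.exists_countable_dense_subset
  -- define B'
  set N : Set ℝ := ⋃ t ∈ C, A ∩ (fun a => a + t) '' A with hN
  have hNnull : μ N = 0 := by
    rw [hN, measure_biUnion_null_iff hCcnt]
    intro t ht
    have := hCsub ht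
    simp only [Set.mem_setOf_eq] at this
    rw [himg t]
    calc μ (A ∩ (fun a => a - t) ⁻¹' A)
        = ν ((fun a => a - t) ⁻¹' A) := by
          rw [hν, Measure.restrict_apply ((measurable_sub_const t) hAm), Set.inter_comm]
      _ = 0 := this
  refine ⟨A \ N, fun x hx => hAB hx.1, hAm.diff ?_, ?_, ?_⟩
  · refine MeasurableSet.biUnion hCcnt fun t _ => ?_
    rw [himg t]
    exact hAm.inter ((measurable_sub_const t) hAm)
  · rw [measure_diff_null hNnull]; exact hn
  · -- interior empty
    rw [Set.eq_empty_iff_forall_notMem]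
    intro x hx
    have hopen : IsOpen (interior ((A \ N) - (A \ N))) := isOpen_interior
    obtain ⟨c, hcI, hcC⟩ := hCdense.inter_open_nonempty _ hopen ⟨x, hx⟩
    have hcmem : c ∈ (A \ N) - (A \ N) := interior_subset hcI
    rw [Set.mem_sub] at hcmem
    obtain ⟨a, ha, b, hb, hab⟩ := hcmem
    apply ha.2
    rw [hN]
    refine Set.mem_biUnion hcC ⟨ha.1, b, hb.1, ?_⟩
    simp only
    linarith
end

section
/- Let B ⊆ ℝ be a Borel set of Lebesgue measure zero and μ a translation invariant Borel measure on ℝ for which B has positive σ-finite measure. Then there exists a compact set C ⊆ B with μ(C) > 0 such that C − C has empty interior. -/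
open MeasureTheory Set Filter Metric
open scoped ENNReal Pointwise Topology

theorem stmt3 (B : Set ℝ) (hB : MeasurableSet B) (hB0 : volume B = 0)
    (μ : Measure ℝ) (hμ : TransInv μ) (hpos : 0 < μ B) (hsf : SigmaFiniteOn μ B) :
    ∃ C : Set ℝ, C ⊆ B ∧ IsCompact C ∧ 0 < μ C ∧ interior (C - C) = ∅ := by
  classical
  obtain ⟨s, hsm, hsfin, hBeq⟩ := hsf
  -- find a piece of positive finite measure
  have hexists : ∃ n, 0 < μ (B ∩ s n) := by
    by_contra h
    push_neg at h
    have : μ B = 0 := by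
      have : B ⊆ ⋃ n, B ∩ s n := by
        intro x hx
        have : x ∈ ⋃ n, s n := hBeq ▸ hx
        obtain ⟨n, hn⟩ := mem_iUnion.1 this
        exact mem_iUnion.2 ⟨n, hx, hn⟩
      refine le_antisymm ?_ zero_le
      calc μ B ≤ μ (⋃ n, B ∩ s n) := measure_mono this
        _ ≤ ∑' n, μ (B ∩ s n) := measure_iUnion_le _
        _ = 0 := by simp [le_antisymm (h _) zero_le]
    exact absurd this hpos.ne'
  obtain ⟨n, hn⟩ := hexists
  set A : Set ℝ := B ∩ s n with hA_def
  have hAm : MeasurableSet A := hB.inter (hsm n)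
  have hAB : A ⊆ B := inter_subset_left
  have hAfin : μ A < ⊤ := lt_of_le_of_lt (measure_mono inter_subset_right) (hsfin n)
  have hA0 : volume A = 0 := measure_mono_null hAB hB0
  set ν : Measure ℝ := μ.restrict A with hν_def
  haveI : IsFiniteMeasure ν := by
    constructor
    rw [hν_def, Measure.restrict_apply_univ]
    exact hAfin
  -- the product set
  set T : Set (ℝ × ℝ) := {p : ℝ × ℝ | p.2 ∈ A ∧ p.2 - p.1 ∈ A} with hT_def
  have hTm : MeasurableSet T := by
    apply MeasurableSet.inter
    · exact measurable_snd hAm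
    · exact (measurable_snd.sub measurable_fst) hAm
  -- (volume.prod ν) T = 0
  have hprod0 : (volume.prod ν) T = 0 := by
    have hswap : (volume.prod ν) T = (ν.prod volume) (Prod.swap ⁻¹' T) := by
      rw [← Measure.prod_swap, Measure.map_apply measurable_swap hTm]
    rw [hswap, Measure.prod_apply (measurable_swap hTm)]
    have : ∀ x : ℝ, volume (Prod.mk x ⁻¹' (Prod.swap ⁻¹' T)) = 0 := by
      intro x
      have hsub : (Prod.mk x ⁻¹' (Prod.swap ⁻¹' T)) ⊆ (fun t : ℝ => x - t) ⁻¹' A := by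
        intro t ht
        exact ht.2
      refine measure_mono_null hsub ?_
      have heq : (fun t : ℝ => x - t) ⁻¹' A = -((fun u : ℝ => x + u) ⁻¹' A) := by
        ext t
        simp [sub_eq_add_neg, Set.mem_neg]
      rw [heq, Measure.measure_neg, measure_preimage_add, hA0]
    simp [this]
  -- a.e. t, slice has ν-measure 0
  have hslice_meas : Measurable fun t : ℝ => ν (Prod.mk t ⁻¹' T) :=
    measurable_measure_prodMk_left hTm
  have hae : ∀ᵐ t : ℝ, ν (Prod.mk t ⁻¹' T) = 0 := by
    rw [Measure.prod_apply hTm] at hprod0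
    exact (lintegral_eq_zero_iff hslice_meas).1 hprod0
  set G : Set ℝ := {t : ℝ | ν (Prod.mk t ⁻¹' T) = 0} with hG_def
  have hGfull : volume Gᶜ = 0 := by
    simpa [hG_def, ae_iff, compl_setOf] using hae
  have hGdense : Dense G := by
    rw [dense_iff_inter_open]
    intro U hU hUne
    by_contra h
    push_neg at h
    have hsub : U ⊆ Gᶜ := by
      intro x hx
      by_contra hx'
      have hne : (U ∩ G).Nonempty := ⟨x, hx, not_not.1 hx'⟩
      exact hne.ne_empty h
    exact absurd (measure_mono_null hsub hGfull) (hU.measure_pos volume hUne).ne'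
  -- countable dense subset of G
  obtain ⟨D0, hD0c, hD0d⟩ := TopologicalSpace.exists_countable_dense ↥G
  set D : Set ℝ := (↑) '' D0 with hD_def
  have hDG : D ⊆ G := by rintro _ ⟨⟨y, hy⟩, _, rfl⟩; exact hy
  have hDc : D.Countable := hD0c.image _
  have hDdense : Dense D := by
    have hGD : G ⊆ closure D := by
      intro t ht
      have : (⟨t, ht⟩ : ↥G) ∈ closure D0 := hD0d _
      exact closure_subtype.1 this
    have h1 : Dense (closure D) := hGdense.mono hGD
    exact dense_closure.mp h1
  -- remove the null slices
  set N : Set ℝ := ⋃ t ∈ D, (Prod.mk t ⁻¹' T) with hN_def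
  have hN0 : ν N = 0 := by
    rw [hN_def, measure_biUnion_null_iff hDc]
    intro t ht
    exact hDG ht
  have hNm : MeasurableSet N :=
    MeasurableSet.biUnion hDc (fun t _ => measurable_prodMk_left hTm)
  set C₁ : Set ℝ := A \ N with hC₁_def
  have hC₁m : MeasurableSet C₁ := hAm.diff hNm
  have hC₁meas : ν C₁ = μ A := by
    rw [hC₁_def, measure_diff_null hN0, hν_def, Measure.restrict_apply hAm, inter_self]
  have hC₁pos : 0 < ν C₁ := by rw [hC₁meas]; exact lt_of_lt_of_le hn le_rfl
  have hC₁fin : ν C₁ ≠ ⊤ := by rw [hC₁meas]; exact hAfin.ne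
  -- inner regularity: compact subset of positive measure
  obtain ⟨C, hCC₁, hCcomp, hCmeas⟩ :=
    hC₁m.exists_isCompact_lt_add (μ := ν) hC₁fin (ε := ν C₁) hC₁pos.ne'
  have hCpos : 0 < ν C := by
    by_contra h
    push_neg at h
    have : ν C = 0 := le_antisymm h zero_le
    rw [this, zero_add] at hCmeas
    exact lt_irrefl _ hCmeas
  have hCA : C ⊆ A := hCC₁.trans diff_subset
  refine ⟨C, hCA.trans hAB, hCcomp, ?_, ?_⟩
  · have : ν C ≤ μ C := by
      rw [hν_def, Measure.restrict_apply' hAm]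
      exact measure_mono inter_subset_left
    exact lt_of_lt_of_le hCpos this
  · -- interior (C - C) = ∅
    rw [eq_empty_iff_forall_notMem]
    intro x hx
    obtain ⟨U, hUsub, hUopen, hxU⟩ := mem_interior.1 hx
    obtain ⟨t, htU, htD⟩ := hDdense.inter_open_nonempty U hUopen ⟨x, hxU⟩
    have htCC : t ∈ C - C := hUsub htU
    obtain ⟨c, hc, c', hc', hcc'⟩ := mem_sub.1 htCC
    -- c ∈ C₁ so c ∉ N, but c ∈ slice t ⊆ N
    have hcC₁ : c ∈ C₁ := hCC₁ hc
    have hcslice : c ∈ Prod.mk t ⁻¹' T := by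
      constructor
      · exact hCA hc
      · have : c - t = c' := by rw [← hcc']; ring
        rw [this]
        exact hCA hc'
    have : c ∈ N := mem_biUnion htD hcslice
    exact hcC₁.2 this
end

section
/- Let B ⊆ ℝ be a dense G_δ set such that {t ∈ ℝ : B + t ⊆ B} is dense in ℝ, and let C ⊆ B be a compact set with int(C − C) = ∅. Then there exist continuum many reals t such that the translates C + t are pairwise disjoint and all contained in B. -/
open MeasureTheory Set Filter Metric
open scoped ENNReal Pointwise Topology

open scoped Topology in
lemma my_step (K : Set ℝ) (hK : IsClosed K) (hKd : Dense Kᶜ) (hKs : ∀ x ∈ K, -x ∈ K)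
    (W : Set ℝ) (hW : IsOpen W) (hWd : Dense W) (x r : ℝ) (hr : 0 < r) :
    ∃ x₀ x₁ r' : ℝ, 0 < r' ∧ r' ≤ r / 2 ∧
      closedBall x₀ r' ⊆ ball x r ∧ closedBall x₁ r' ⊆ ball x r ∧
      closedBall x₀ r' ⊆ W ∧ closedBall x₁ r' ⊆ W ∧
      (∀ u ∈ closedBall x₀ r', ∀ v ∈ closedBall x₁ r', u - v ∉ K) := by
  have hBW : IsOpen (ball x r ∩ W) := isOpen_ball.inter hW
  obtain ⟨x₀, hx₀W, hx₀b⟩ := hWd.exists_mem_open isOpen_ball ⟨x, mem_ball_self hr⟩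
  have hx₀ : x₀ ∈ ball x r ∩ W := ⟨hx₀b, hx₀W⟩
  -- dense open set of points whose difference with x₀ avoids K
  have hsub : IsOpenMap (fun y : ℝ => y - x₀) := by
    simpa [sub_eq_add_neg] using (Homeomorph.addRight (-x₀)).isOpenMap
  have hVo : IsOpen ((fun y : ℝ => y - x₀) ⁻¹' Kᶜ) :=
    hK.isOpen_compl.preimage (continuous_id.sub continuous_const)
  have hVd : Dense ((fun y : ℝ => y - x₀) ⁻¹' Kᶜ) := hKd.preimage hsub
  obtain ⟨x₁, hx₁V, hx₁bw⟩ := hVd.exists_mem_open hBW ⟨x₀, hx₀⟩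
  have hx₁K : x₁ - x₀ ∉ K := hx₁V
  have hx₀₁ : x₀ - x₁ ∉ K := fun h => hx₁K (by simpa using hKs _ h)
  -- choose radii
  obtain ⟨ε₀, hε₀, hb₀⟩ := Metric.isOpen_iff.1 hBW x₀ hx₀
  obtain ⟨ε₁, hε₁, hb₁⟩ := Metric.isOpen_iff.1 hBW x₁ hx₁bw
  obtain ⟨ε₂, hε₂, hb₂⟩ := Metric.isOpen_iff.1 hK.isOpen_compl (x₀ - x₁) hx₀₁
  refine ⟨x₀, x₁, min (min (ε₀ / 2) (ε₁ / 2)) (min (ε₂ / 3) (r / 2)), by positivity,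
    ?_, ?_, ?_, ?_, ?_, ?_⟩
  · exact (min_le_right _ _).trans (min_le_right _ _)
  · intro y hy
    have : dist y x₀ < ε₀ := lt_of_le_of_lt (by
      calc dist y x₀ ≤ min (min (ε₀ / 2) (ε₁ / 2)) (min (ε₂ / 3) (r / 2)) := hy
        _ ≤ ε₀ / 2 := (min_le_left _ _).trans (min_le_left _ _)) (by linarith)
    exact (hb₀ this).1
  · intro y hy
    have : dist y x₁ < ε₁ := lt_of_le_of_lt (by
      calc dist y x₁ ≤ min (min (ε₀ / 2) (ε₁ / 2)) (min (ε₂ / 3) (r / 2)) := hy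
        _ ≤ ε₁ / 2 := (min_le_left _ _).trans (min_le_right _ _)) (by linarith)
    exact (hb₁ this).1
  · intro y hy
    have : dist y x₀ < ε₀ := lt_of_le_of_lt (hy.trans ((min_le_left _ _).trans (min_le_left _ _)))
      (by linarith)
    exact (hb₀ this).2
  · intro y hy
    have : dist y x₁ < ε₁ := lt_of_le_of_lt (hy.trans ((min_le_left _ _).trans (min_le_right _ _)))
      (by linarith)
    exact (hb₁ this).2
  · intro u hu v hv hK'
    have h3 : dist u x₀ ≤ ε₂ / 3 := hu.trans ((min_le_right _ _).trans (min_le_left _ _))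
    have h4 : dist v x₁ ≤ ε₂ / 3 := hv.trans ((min_le_right _ _).trans (min_le_left _ _))
    have : dist (u - v) (x₀ - x₁) < ε₂ := by
      calc dist (u - v) (x₀ - x₁) ≤ dist u x₀ + dist v x₁ := dist_sub_sub_le _ _ _ _
        _ ≤ ε₂ / 3 + ε₂ / 3 := add_le_add h3 h4
        _ < ε₂ := by linarith
    exact hb₂ this hK'

lemma my_cantor (K : Set ℝ) (hK : IsClosed K) (hKd : Dense Kᶜ) (hKs : ∀ x ∈ K, -x ∈ K)
    (W : ℕ → Set ℝ) (hWo : ∀ n, IsOpen (W n)) (hWd : ∀ n, Dense (W n)) :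
    ∃ F : (ℕ → Bool) → ℝ, (∀ a n, F a ∈ W n) ∧
      (∀ a b, a ≠ b → F a - F b ∉ K) := by
  classical
  have step := fun n => my_step K hK hKd hKs (W n) (hWo n) (hWd n)
  choose! x0 x1 rad hpos hhalf hb0 hb1 hW0 hW1 hsplit using step
  -- cells indexed by reversed bit strings (head = most recent bit)
  let child : ℕ → ℝ × ℝ → Bool → ℝ × ℝ := fun n p b =>
    (if b then x1 n p.1 p.2 else x0 n p.1 p.2, rad n p.1 p.2)
  let P : List Bool → ℝ × ℝ := fun σ =>
    List.rec ((0 : ℝ), (1 : ℝ)) (fun b σ ih => child σ.length ih b) σ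
  have hPnil : P [] = (0, 1) := rfl
  have hPcons : ∀ b σ, P (b :: σ) = child σ.length (P σ) b := fun _ _ => rfl
  let Q : List Bool → Set ℝ := fun σ => closedBall (P σ).1 (P σ).2
  have hQpos : ∀ σ : List Bool, 0 < (P σ).2 := by
    intro σ
    induction σ with
    | nil => norm_num [hPnil]
    | cons b σ ih => exact hpos σ.length (P σ).1 (P σ).2 ih
  have hQball : ∀ σ b, Q (b :: σ) ⊆ ball (P σ).1 (P σ).2 := by
    intro σ b
    cases b
    · exact hb0 σ.length (P σ).1 (P σ).2 (hQpos σ)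
    · exact hb1 σ.length (P σ).1 (P σ).2 (hQpos σ)
  have hQsub : ∀ σ b, Q (b :: σ) ⊆ Q σ := fun σ b =>
    (hQball σ b).trans ball_subset_closedBall
  have hQW : ∀ σ b, Q (b :: σ) ⊆ W σ.length := by
    intro σ b
    cases b
    · exact hW0 σ.length (P σ).1 (P σ).2 (hQpos σ)
    · exact hW1 σ.length (P σ).1 (P σ).2 (hQpos σ)
  have hQsplit : ∀ σ, ∀ u ∈ Q (false :: σ), ∀ v ∈ Q (true :: σ), u - v ∉ K := by
    intro σ u hu v hv
    exact hsplit σ.length (P σ).1 (P σ).2 (hQpos σ) u hu v hv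
  have hrad : ∀ σ : List Bool, (P σ).2 ≤ (1 / 2) ^ σ.length := by
    intro σ
    induction σ with
    | nil => norm_num [hPnil]
    | cons b σ ih =>
        have := hhalf σ.length (P σ).1 (P σ).2 (hQpos σ)
        have hr' : (P (b :: σ)).2 = rad σ.length (P σ).1 (P σ).2 := rfl
        rw [hr', List.length_cons, pow_succ]
        calc rad σ.length (P σ).1 (P σ).2 ≤ (P σ).2 / 2 := this
          _ ≤ (1 / 2) ^ σ.length / 2 := by linarith
          _ = (1 / 2) ^ σ.length * (1 / 2) := by ring
  -- branches
  let L : (ℕ → Bool) → ℕ → List Bool := fun a n => Nat.rec [] (fun m ih => a m :: ih) n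
  have hLzero : ∀ a, L a 0 = [] := fun _ => rfl
  have hLsucc : ∀ a n, L a (n + 1) = a n :: L a n := fun _ _ => rfl
  have hLlen : ∀ a n, (L a n).length = n := by
    intro a n; induction n with
    | zero => rfl
    | succ n ih => rw [hLsucc, List.length_cons, ih]
  have hLmono : ∀ a m n, m ≤ n → Q (L a n) ⊆ Q (L a m) := by
    intro a m n h
    induction n with
    | zero => rw [Nat.le_zero.1 h]
    | succ n ih =>
        rcases Nat.lt_or_ge m (n + 1) with h' | h'
        · exact (hQsub (L a n) (a n)).trans (ih (Nat.lt_succ_iff.1 h'))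
        · rw [Nat.le_antisymm h h']
  let c : (ℕ → Bool) → ℕ → ℝ := fun a n => (P (L a n)).1
  have hcmem : ∀ a n, c a n ∈ Q (L a n) := fun a n =>
    mem_closedBall_self (le_of_lt (hQpos _))
  have hcd : ∀ a n, dist (c a n) (c a (n + 1)) ≤ 1 * (1 / 2) ^ n := by
    intro a n
    have h1 : c a (n + 1) ∈ ball (P (L a n)).1 (P (L a n)).2 := by
      have := hQball (L a n) (a n)
      rw [← hLsucc] at this
      exact this (hcmem a (n + 1))
    have := mem_ball.1 h1
    calc dist (c a n) (c a (n + 1)) = dist (c a (n + 1)) (c a n) := dist_comm _ _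
      _ ≤ (P (L a n)).2 := le_of_lt this
      _ ≤ (1 / 2) ^ (L a n).length := hrad _
      _ = 1 * (1 / 2) ^ n := by rw [hLlen]; ring
  have hcauchy : ∀ a, CauchySeq (c a) := fun a =>
    cauchySeq_of_le_geometric (1 / 2) 1 (by norm_num) (hcd a)
  have hlim := fun a => cauchySeq_tendsto_of_complete (hcauchy a)
  choose F hF using hlim
  have hFQ : ∀ a n, F a ∈ Q (L a n) := by
    intro a n
    refine isClosed_closedBall.mem_of_tendsto (hF a) ?_
    filter_upwards [eventually_ge_atTop n] with m hm
    exact hLmono a n m hm (hcmem a m)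
  have hFW : ∀ a n, F a ∈ W n := by
    intro a n
    have := hQW (L a n) (a n)
    rw [← hLsucc, hLlen] at this
    exact this (hFQ a (n + 1))
  refine ⟨F, hFW, ?_⟩
  intro a b hab
  -- minimal splitting index
  have hex : ∃ n, a n ≠ b n := by
    by_contra h
    push_neg at h
    exact hab (funext h)
  set n := Nat.find hex with hn
  have hne : a n ≠ b n := Nat.find_spec hex
  have hagree : ∀ m < n, a m = b m := fun m hm => by
    by_contra h
    exact Nat.find_min hex hm h
  have key : ∀ k, (∀ m < k, a m = b m) → L a k = L b k := by
    intro k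
    induction k with
    | zero => intro _; rfl
    | succ k ih =>
        intro h
        rw [hLsucc, hLsucc, ih (fun m hm => h m (hm.trans (Nat.lt_succ_self k))),
          h k (Nat.lt_succ_self k)]
  have hLeq : L a n = L b n := key n hagree
  have ha : F a ∈ Q (a n :: L a n) := by rw [← hLsucc]; exact hFQ a (n + 1)
  have hb : F b ∈ Q (b n :: L a n) := by rw [hLeq, ← hLsucc]; exact hFQ b (n + 1)
  cases hA : a n <;> cases hB : b n
  · rw [hA, hB] at hne; exact absurd rfl hne
  · rw [hA] at ha; rw [hB] at hb
    exact hQsplit (L a n) _ ha _ hb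
  · rw [hA] at ha; rw [hB] at hb
    intro h
    exact hQsplit (L a n) _ hb _ ha (by simpa [neg_sub] using hKs _ h)
  · rw [hA, hB] at hne; exact absurd rfl hne

theorem stmt4 (B : Set ℝ) (hBdense : Dense B) (hBGδ : IsGδ B)
    (hper : Dense {t : ℝ | (· + t) '' B ⊆ B})
    (C : Set ℝ) (hCB : C ⊆ B) (hC : IsCompact C) (hCC : interior (C - C) = ∅) :
    ∃ T : Set ℝ, Cardinal.mk T = Cardinal.continuum ∧
      (∀ t ∈ T, (· + t) '' C ⊆ B) ∧
      T.Pairwise (fun t s => Disjoint ((· + t) '' C) ((· + s) '' C)) := by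
  classical
  set K : Set ℝ := (C - C) ∪ {0} with hKdef
  have hCCcompact : IsCompact (C - C) := by
    rw [← Set.sub_image_prod]
    exact (hC.prod hC).image (continuous_fst.sub continuous_snd)
  have hKclosed : IsClosed K := hCCcompact.isClosed.union isClosed_singleton
  have hKd : Dense Kᶜ := by
    rw [hKdef, Set.compl_union]
    exact (interior_eq_empty_iff_dense_compl.1 hCC).inter_of_isOpen_left
      (dense_compl_singleton 0) hCCcompact.isClosed.isOpen_compl
  have hKs : ∀ x ∈ K, -x ∈ K := by
    rintro x (hx | hx)
    · obtain ⟨a, ha, b, hb, rfl⟩ := hx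
      exact Or.inl ⟨b, hb, a, ha, by ring⟩
    · simp only [Set.mem_singleton_iff] at hx
      subst hx
      exact Or.inr (by simp)
  have h0K : (0 : ℝ) ∈ K := Or.inr rfl
  obtain ⟨f, hfo, hfB⟩ := hBGδ.eq_iInter_nat
  set D : ℕ → Set ℝ := fun n => {t | (· + t) '' C ⊆ f n} with hDdef
  have hDd : ∀ n, Dense (D n) := by
    intro n
    refine Dense.mono ?_ hper
    intro t ht
    intro x hx
    have hxB : x ∈ B := by
      have : (· + t) '' C ⊆ B := (Set.image_mono hCB).trans ht
      exact this hx
    rw [hfB] at hxB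
    exact Set.mem_iInter.1 hxB n
  have hDo : ∀ n, IsOpen (D n) := by
    intro n
    rw [Metric.isOpen_iff]
    intro t₀ ht₀
    have hCt : IsCompact ((· + t₀) '' C) := hC.image (continuous_id.add continuous_const)
    obtain ⟨δ, hδ, hth⟩ := hCt.exists_thickening_subset_open (hfo n) ht₀
    refine ⟨δ, hδ, ?_⟩
    intro t ht
    intro x hx
    obtain ⟨c, hc, rfl⟩ := hx
    refine hth ?_
    rw [Metric.mem_thickening_iff]
    exact ⟨c + t₀, ⟨c, hc, rfl⟩, by simpa [Real.dist_eq] using mem_ball.1 ht⟩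
  obtain ⟨F, hFW, hFsep⟩ := my_cantor K hKclosed hKd hKs D hDo hDd
  have hFinj : Function.Injective F := by
    intro a b hab
    by_contra h
    exact hFsep a b h (by rw [hab, sub_self]; exact h0K)
  refine ⟨Set.range F, ?_, ?_, ?_⟩
  · rw [Cardinal.mk_range_eq F hFinj, Cardinal.mk_arrow, Cardinal.mk_bool, Cardinal.mk_nat,
      Cardinal.lift_id, Cardinal.lift_id, Cardinal.two_power_aleph0]
  · rintro t ⟨a, rfl⟩
    intro x hx
    rw [hfB, Set.mem_iInter]
    exact fun n => hFW a n hx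
  · rintro t ⟨a, rfl⟩ s ⟨b, rfl⟩ hts
    have hab : a ≠ b := fun h => hts (by rw [h])
    have hd := hFsep a b hab
    rw [Set.disjoint_left]
    rintro x ⟨c₁, hc₁, h₁⟩ ⟨c₂, hc₂, h₂⟩
    refine hd (Or.inl ?_)
    have : F a - F b = c₂ - c₁ := by
      simp only at h₁ h₂
      linarith [h₁, h₂.symm]
    rw [this]
    exact ⟨c₂, hc₂, c₁, hc₁, rfl⟩
end

section
/- Let B ⊆ ℝ be a nonempty G_δ set of Lebesgue measure zero such that {t ∈ ℝ : B + t ⊆ B} is dense in ℝ. Then for every translation invariant Borel measure μ on ℝ, B is either μ-null or not σ-finite for μ. -/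
open MeasureTheory Set Filter Metric
open scoped ENNReal Pointwise Topology

/-- A translate of a set is contained in the `r`-cthickening of a nearby translate. -/
lemma translate_subset_cthickening (C : Set ℝ) (t t' r : ℝ) (h : dist t' t ≤ r) :
    (· + t') '' C ⊆ cthickening r ((· + t) '' C) := by
  rintro _ ⟨x, hx, rfl⟩
  refine mem_cthickening_of_dist_le (x + t') (x + t) r _ ⟨x, hx, rfl⟩ ?_
  simpa [Real.dist_eq, abs_sub_comm] using h

lemma image_add_eq_preimage (C : Set ℝ) (t : ℝ) :
    (· + t) '' C = (fun x => x - t) ⁻¹' C := by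
  ext x
  simp [Set.mem_image, eq_comm, sub_eq_iff_eq_add', eq_sub_iff_add_eq, sub_eq_add_neg]

theorem stmt5 (B : Set ℝ) (hne : B.Nonempty) (hBGδ : IsGδ B) (hB0 : volume B = 0)
    (hper : Dense {t : ℝ | (· + t) '' B ⊆ B}) :
    ∀ μ : Measure ℝ, TransInv μ → μ B = 0 ∨ ¬ SigmaFiniteOn μ B := by
  intro μ hTI
  by_cases hσ : SigmaFiniteOn μ B
  swap
  · exact Or.inr hσ
  left
  by_contra hμB
  obtain ⟨s, hsm, hsfin, hsU⟩ := hσ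
  -- there is some `n` with `μ (s n) ≠ 0`
  have hex : ∃ n, μ (s n) ≠ 0 := by
    by_contra h
    push_neg at h
    exact hμB (le_antisymm (by rw [hsU]; simpa [h] using measure_iUnion_le (μ := μ) s)
      zero_le)
  obtain ⟨n, hn⟩ := hex
  -- the restricted measure is finite
  have hfin : ∀ m, IsFiniteMeasure (μ.restrict (s m)) := fun m =>
    ⟨by rw [Measure.restrict_apply_univ]; exact hsfin m⟩
  haveI := hfin n
  -- find a compact `C ⊆ s n` with `μ C > 0`
  obtain ⟨C, hCsub, hCcomp, hCpos⟩ : ∃ C, C ⊆ s n ∧ IsCompact C ∧ 0 < μ.restrict (s n) C := by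
    have h1 : μ.restrict (s n) (s n) ≠ ⊤ := by
      rw [Measure.restrict_apply_self]; exact (hsfin n).ne
    have h2 : μ.restrict (s n) (s n) ≠ 0 := by
      rw [Measure.restrict_apply_self]; exact hn
    obtain ⟨K, hK1, hK2, hK3⟩ := (hsm n).exists_isCompact_lt_add (μ := μ.restrict (s n)) h1
      (ε := μ.restrict (s n) (s n)) h2
    refine ⟨K, hK1, hK2, ?_⟩
    by_contra h
    push_neg at h
    rw [le_zero_iff.mp h, zero_add] at hK3
    exact lt_irrefl _ hK3
  have hCm : MeasurableSet C := hCcomp.measurableSet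
  have hμCpos : 0 < μ C := by
    have : μ.restrict (s n) C = μ C := by
      rw [Measure.restrict_apply hCm, inter_eq_self_of_subset_left hCsub]
    rwa [this] at hCpos
  have hsnB : ∀ m, s m ⊆ B := fun m => by rw [hsU]; exact subset_iUnion s m
  have hCB : C ⊆ B := hCsub.trans (hsnB n)
  have hCvol : volume C = 0 := measure_mono_null hCB hB0
  -- Gδ structure
  obtain ⟨U, hUopen, hUeq⟩ := hBGδ.eq_iInter_nat
  -- the functions g m t = μ.restrict (s m) (C + t)
  set g : ℕ → ℝ → ℝ≥0∞ := fun m t => μ.restrict (s m) ((· + t) '' C) with hg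
  -- the integral of g m is zero
  have hint : ∀ m, ∫⁻ t, g m t ∂volume = 0 := by
    intro m
    haveI := hfin m
    set ν := μ.restrict (s m)
    have hmeas : Measurable (fun p : ℝ × ℝ => C.indicator (1 : ℝ → ℝ≥0∞) (p.2 - p.1)) :=
      (measurable_const.indicator hCm).comp (measurable_snd.sub measurable_fst)
    have step1 : ∀ t, g m t = ∫⁻ x, C.indicator (1 : ℝ → ℝ≥0∞) (x - t) ∂ν := by
      intro t
      have hpre : MeasurableSet ((fun x : ℝ => x - t) ⁻¹' C) :=
        hCm.preimage (measurable_sub_const t)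
      have : (fun x : ℝ => C.indicator (1 : ℝ → ℝ≥0∞) (x - t))
          = ((fun x : ℝ => x - t) ⁻¹' C).indicator (1 : ℝ → ℝ≥0∞) := by
        ext x
        by_cases hx : x - t ∈ C <;> simp [Set.indicator, hx]
      rw [hg]
      simp only [image_add_eq_preimage]
      rw [this, lintegral_indicator_one hpre]
    have step2 : ∀ x : ℝ, ∫⁻ t, C.indicator (1 : ℝ → ℝ≥0∞) (x - t) ∂volume = volume C := by
      intro x
      have hpre : MeasurableSet ((fun t : ℝ => x - t) ⁻¹' C) :=
        hCm.preimage (measurable_const.sub measurable_id)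
      have : (fun t : ℝ => C.indicator (1 : ℝ → ℝ≥0∞) (x - t))
          = ((fun t : ℝ => x - t) ⁻¹' C).indicator (1 : ℝ → ℝ≥0∞) := by
        ext t
        by_cases ht : x - t ∈ C <;> simp [Set.indicator, ht]
      rw [this, lintegral_indicator_one hpre,
        (Measure.measurePreserving_sub_left volume x).measure_preimage hCm.nullMeasurableSet]
    calc ∫⁻ t, g m t ∂volume
        = ∫⁻ t, ∫⁻ x, C.indicator (1 : ℝ → ℝ≥0∞) (x - t) ∂ν ∂volume := by
          exact lintegral_congr step1
      _ = ∫⁻ x, ∫⁻ t, C.indicator (1 : ℝ → ℝ≥0∞) (x - t) ∂volume ∂ν :=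
          lintegral_lintegral_swap hmeas.aemeasurable
      _ = ∫⁻ _, volume C ∂ν := lintegral_congr step2
      _ = 0 := by simp [hCvol]
  -- the "bad" sets are closed
  have hWopen : ∀ m (k : ℕ), IsOpen {t : ℝ | g m t < ((k : ℝ≥0∞))⁻¹} := by
    intro m k
    haveI := hfin m
    rw [Metric.isOpen_iff]
    intro t ht
    simp only [mem_setOf_eq] at ht
    have hs₀ : IsCompact ((· + t) '' C) := hCcomp.image (continuous_add_right t)
    have htend := tendsto_measure_cthickening_of_isClosed
      (μ := μ.restrict (s m)) (s := (· + t) '' C)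
      ⟨1, one_pos, measure_ne_top _ _⟩ hs₀.isClosed
    have hev : ∀ᶠ r in 𝓝 (0 : ℝ),
        μ.restrict (s m) (cthickening r ((· + t) '' C)) < ((k : ℝ≥0∞))⁻¹ :=
      htend.eventually_lt_const ht
    obtain ⟨δ, hδpos, hδ⟩ := Metric.eventually_nhds_iff.mp hev
    refine ⟨δ, hδpos, fun t' ht' => ?_⟩
    simp only [mem_ball] at ht'
    have hr : dist (dist t' t) 0 < δ := by
      rw [Real.dist_eq, sub_zero, abs_of_nonneg dist_nonneg]; exact ht'
    have hsub := translate_subset_cthickening C t t' (dist t' t) le_rfl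
    exact lt_of_le_of_lt (measure_mono hsub) (hδ hr)
  -- the bad sets are Lebesgue-null
  have hEnull : ∀ m (k : ℕ), volume {t : ℝ | ((k : ℝ≥0∞))⁻¹ ≤ g m t} = 0 := by
    intro m k
    set E := {t : ℝ | ((k : ℝ≥0∞))⁻¹ ≤ g m t} with hE
    have hEm : MeasurableSet E := by
      have : E = {t : ℝ | g m t < ((k : ℝ≥0∞))⁻¹}ᶜ := by
        ext t; simp [hE, not_lt]
      rw [this]
      exact (hWopen m k).measurableSet.compl
    have hle : ((k : ℝ≥0∞))⁻¹ * volume E ≤ ∫⁻ t, g m t ∂volume := by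
      rw [← lintegral_indicator_const hEm]
      refine lintegral_mono fun t => ?_
      by_cases ht : t ∈ E
      · rw [Set.indicator_of_mem ht]; exact ht
      · rw [Set.indicator_of_notMem ht]; exact zero_le
    rw [hint m, le_zero_iff] at hle
    have hkne : ((k : ℝ≥0∞))⁻¹ ≠ 0 := ENNReal.inv_ne_zero.mpr (ENNReal.natCast_ne_top k)
    exact (mul_eq_zero.mp hle).resolve_left hkne
  -- the good open sets are dense
  have hWdense : ∀ m (k : ℕ), Dense {t : ℝ | g m t < ((k : ℝ≥0∞))⁻¹} := by
    intro m k
    have hcompl : {t : ℝ | g m t < ((k : ℝ≥0∞))⁻¹} = {t : ℝ | ((k : ℝ≥0∞))⁻¹ ≤ g m t}ᶜ := by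
      ext t; simp [not_le]
    rw [hcompl]
    rw [← interior_eq_empty_iff_dense_compl]
    rw [Set.eq_empty_iff_forall_notMem]
    intro x hx
    obtain ⟨ε, hεpos, hball⟩ := Metric.mem_nhds_iff.mp (mem_interior_iff_mem_nhds.mp hx)
    have : volume (ball x ε) = 0 :=
      measure_mono_null hball (hEnull m k)
    exact absurd this (measure_ball_pos volume x hεpos).ne'
  -- the translation sets T k are open and dense
  have hTopen : ∀ k : ℕ, IsOpen {t : ℝ | (· + t) '' C ⊆ U k} := by
    intro k
    rw [Metric.isOpen_iff]
    intro t ht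
    simp only [mem_setOf_eq] at ht
    have hs₀ : IsCompact ((· + t) '' C) := hCcomp.image (continuous_add_right t)
    obtain ⟨δ, hδpos, hδ⟩ := hs₀.exists_cthickening_subset_open (hUopen k) ht
    refine ⟨δ, hδpos, fun t' ht' => ?_⟩
    simp only [mem_ball] at ht'
    exact (translate_subset_cthickening C t t' δ ht'.le).trans hδ
  have hTdense : ∀ k : ℕ, Dense {t : ℝ | (· + t) '' C ⊆ U k} := by
    intro k
    refine hper.mono fun t ht => ?_
    simp only [mem_setOf_eq] at ht ⊢
    refine ((Set.image_mono hCB).trans ht).trans ?_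
    rw [hUeq]; exact iInter_subset U k
  -- assemble the countable family and apply Baire
  let F : (ℕ ⊕ ℕ × ℕ) → Set ℝ := fun i =>
    match i with
    | Sum.inl k => {t : ℝ | (· + t) '' C ⊆ U k}
    | Sum.inr (m, k) => {t : ℝ | g m t < ((k : ℝ≥0∞))⁻¹}
  have hFopen : ∀ i, IsOpen (F i) := by
    rintro (k | ⟨m, k⟩)
    · exact hTopen k
    · exact hWopen m k
  have hFdense : ∀ i, Dense (F i) := by
    rintro (k | ⟨m, k⟩)
    · exact hTdense k
    · exact hWdense m k
  obtain ⟨t, ht⟩ := (dense_iInter_of_isOpen hFopen hFdense).nonempty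
  simp only [mem_iInter] at ht
  -- t translates C into B
  have htB : (· + t) '' C ⊆ B := by
    rw [hUeq]
    exact subset_iInter fun k => ht (Sum.inl k)
  -- and all the restricted measures of the translate vanish
  have hg0 : ∀ m, μ ((· + t) '' C ∩ s m) = 0 := by
    intro m
    have hzero : g m t = 0 := by
      by_contra h
      obtain ⟨k, hk⟩ := ENNReal.exists_inv_nat_lt h
      exact absurd (ht (Sum.inr (m, k))) (not_lt.mpr hk.le)
    rw [← Measure.restrict_apply' (hsm m)]
    exact hzero
  -- contradiction
  have himg : μ ((· + t) '' C) = 0 := by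
    have hcov : (· + t) '' C = ⋃ m, ((· + t) '' C ∩ s m) := by
      rw [← inter_iUnion, ← hsU, inter_eq_self_of_subset_left htB]
    rw [hcov]
    refine le_antisymm ((measure_iUnion_le _).trans ?_) zero_le
    simp only [hg0, tsum_zero, le_refl]
  rw [hTI C hCm t] at himg
  exact absurd himg hμCpos.ne'
end

section
/- If A and B are nonempty Borel subsets of ℝ whose symmetric difference is countable, then A is immeasurable if and only if B is immeasurable. -/
open MeasureTheory Set Filter Metric
open scoped ENNReal Pointwise Topology

/-- A nonempty Borel set is *immeasurable* if it is null or non-σ-finite for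
every translation invariant Borel measure on `ℝ`. -/
def Immeasurable (B : Set ℝ) : Prop :=
  B.Nonempty ∧ MeasurableSet B ∧
    ∀ μ : Measure ℝ, TransInv μ → μ B = 0 ∨ ¬ SigmaFiniteOn μ B

lemma sigma_subset {μ : Measure ℝ} {S T : Set ℝ} (hS : SigmaFiniteOn μ S)
    (hTm : MeasurableSet T) (hsub : T ⊆ S) : SigmaFiniteOn μ T := by
  obtain ⟨s, hsm, hsf, hsU⟩ := hS
  refine ⟨fun n => T ∩ s n, fun n => hTm.inter (hsm n), fun n => ?_, ?_⟩
  · exact lt_of_le_of_lt (measure_mono Set.inter_subset_right) (hsf n)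
  · rw [← Set.inter_iUnion, ← hsU, Set.inter_eq_left.mpr hsub]

lemma sigma_union {μ : Measure ℝ} {S T : Set ℝ} (hS : SigmaFiniteOn μ S)
    (hT : SigmaFiniteOn μ T) : SigmaFiniteOn μ (S ∪ T) := by
  obtain ⟨s, hsm, hsf, hsU⟩ := hS
  obtain ⟨t, htm, htf, htU⟩ := hT
  refine ⟨fun n => s n ∪ t n, fun n => (hsm n).union (htm n), fun n => ?_, ?_⟩
  · exact measure_union_lt_top (hsf n) (htf n)
  · rw [hsU, htU, Set.iUnion_union_distrib]

lemma sigma_countable {μ : Measure ℝ} {S : Set ℝ} (hc : S.Countable)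
    (hfin : ∀ x : ℝ, μ {x} < ⊤) : SigmaFiniteOn μ S := by
  rcases S.eq_empty_or_nonempty with rfl | hne
  · exact ⟨fun _ => ∅, fun _ => MeasurableSet.empty, fun _ => by simp, by simp⟩
  · obtain ⟨f, hf⟩ := hc.exists_eq_range hne
    exact ⟨fun n => {f n}, fun n => measurableSet_singleton _, fun n => hfin (f n),
      by rw [hf]; exact Set.range_eq_iUnion f⟩

lemma key_imm {A B : Set ℝ} (hBne : B.Nonempty) (hBm : MeasurableSet B)
    (hc : (symmDiff A B).Countable) (hA : Immeasurable A) : Immeasurable B := by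
  obtain ⟨hAne, hAm, hAμ⟩ := hA
  refine ⟨hBne, hBm, fun μ hμ => ?_⟩
  have hsing : ∀ x : ℝ, μ {x} = μ {0} := by
    intro x
    have := hμ {0} (measurableSet_singleton 0) x
    simpa using this
  by_cases htop : μ {0} = ⊤
  · right
    rintro ⟨s, hsm, hsf, hsU⟩
    obtain ⟨x, hx⟩ := hBne
    rw [hsU] at hx
    obtain ⟨n, hn⟩ := Set.mem_iUnion.mp hx
    have h1 : μ {x} ≤ μ (s n) := measure_mono (Set.singleton_subset_iff.mpr hn)
    rw [hsing x, htop] at h1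
    exact (hsf n).not_ge h1
  · have hfin : ∀ x : ℝ, μ {x} < ⊤ := fun x => by
      rw [hsing x]; exact lt_top_iff_ne_top.mpr htop
    have hΔ : SigmaFiniteOn μ (symmDiff A B) := sigma_countable hc hfin
    by_cases hBsf : SigmaFiniteOn μ B
    · left
      have hsubA : A ⊆ B ∪ symmDiff A B := by
        intro x hx
        by_cases hxB : x ∈ B
        · exact Or.inl hxB
        · exact Or.inr (Set.mem_symmDiff.mpr (Or.inl ⟨hx, hxB⟩))
      have hAsf : SigmaFiniteOn μ A := sigma_subset (sigma_union hBsf hΔ) hAm hsubA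
      have hA0 : μ A = 0 := (hAμ μ hμ).resolve_right (fun h => h hAsf)
      have hc0 : μ {0} = 0 := by
        obtain ⟨x, hx⟩ := hAne
        have h1 : μ {x} ≤ μ A := measure_mono (Set.singleton_subset_iff.mpr hx)
        rw [hsing x, hA0, nonpos_iff_eq_zero] at h1
        exact h1
      have hΔ0 : μ (symmDiff A B) = 0 := by
        have heq : symmDiff A B = ⋃ x ∈ symmDiff A B, ({x} : Set ℝ) :=
          (Set.biUnion_of_singleton _).symm
        rw [heq, measure_biUnion_null_iff hc]
        intro x _
        rw [hsing x]; exact hc0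
      have hsubB : B ⊆ A ∪ symmDiff A B := by
        intro x hx
        by_cases hxA : x ∈ A
        · exact Or.inl hxA
        · exact Or.inr (Set.mem_symmDiff.mpr (Or.inr ⟨hx, hxA⟩))
      exact measure_mono_null hsubB (measure_union_null hA0 hΔ0)
    · exact Or.inr hBsf

theorem stmt9 (A B : Set ℝ) (hA : A.Nonempty) (hB : B.Nonempty)
    (hAm : MeasurableSet A) (hBm : MeasurableSet B)
    (hcount : (symmDiff A B).Countable) :
    Immeasurable A ↔ Immeasurable B := by
  constructor
  · exact fun h => key_imm hB hBm hcount h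
  · exact fun h => key_imm hA hAm (by rw [symmDiff_comm]; exact hcount) h
end

section
/- Let B ⊆ ℝ be a Borel set with B + B ⊆ B such that B − B (the group generated by B) is not F_σ. Then B is immeasurable: for every translation invariant Borel measure μ on ℝ, B is either μ-null or not σ-finite for μ. -/
open MeasureTheory Set Filter Metric
open scoped ENNReal Pointwise Topology

private lemma isCompact_sub' {s t : Set ℝ} (hs : IsCompact s) (ht : IsCompact t) :
    IsCompact (s - t) := by
  rw [show s - t = (fun p : ℝ × ℝ => p.1 - p.2) '' (s ×ˢ t) from by
    rw [Set.image_prod]; exact (Set.image2_sub).symm]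
  exact (hs.prod ht).image (continuous_fst.sub continuous_snd)

theorem stmt12 (B : Set ℝ) (hB : MeasurableSet B) (hBB : B + B ⊆ B)
    (hFσ : ¬ ∃ F : ℕ → Set ℝ, (∀ n, IsClosed (F n)) ∧ B - B = ⋃ n, F n) :
    ∀ μ : Measure ℝ, TransInv μ → μ B = 0 ∨ ¬ SigmaFiniteOn μ B := by
  intro μ hμ
  rw [or_iff_not_imp_left]
  intro hμB hσ
  obtain ⟨s, hsm, hsfin, hBs⟩ := hσ
  have hsB : ∀ n, s n ⊆ B := fun n => hBs ▸ subset_iUnion s n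
  -- a piece of positive measure
  have h1 : ∃ n, μ (s n) ≠ 0 := by
    by_contra h
    push_neg at h
    exact hμB (by rw [hBs]; exact measure_iUnion_null h)
  obtain ⟨n0, hn0⟩ := h1
  -- a closed subset of positive measure, via weak regularity of the finite restricted measure
  set ν := μ.restrict (s n0) with hνdef
  have hνfin : IsFiniteMeasure ν :=
    ⟨by rw [Measure.restrict_apply_univ]; exact hsfin n0⟩
  have hνs : ν (s n0) = μ (s n0) := Measure.restrict_apply_self μ _
  obtain ⟨F, hFs, hFclosed, hFν⟩ :=
    (hsm n0).exists_lt_isClosed_of_ne_top (μ := ν)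
      (by rw [hνs]; exact (hsfin n0).ne)
      (by rw [hνs]; exact pos_iff_ne_zero.mpr hn0)
  have hFpos : μ F ≠ 0 := by
    have : ν F ≤ μ F := Measure.restrict_le_self F
    exact fun h => by simp [h] at this; exact absurd this (by simpa using hFν.ne')
  -- a compact subset of positive finite measure
  have h2 : ∃ m : ℕ, μ (F ∩ Icc (-(m : ℝ)) m) ≠ 0 := by
    by_contra h
    push_neg at h
    apply hFpos
    have hcov : F ⊆ ⋃ m : ℕ, F ∩ Icc (-(m : ℝ)) m := by
      intro x hx
      obtain ⟨m, hm⟩ := exists_nat_ge |x|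
      exact mem_iUnion.mpr ⟨m, hx, by
        constructor
        · linarith [neg_abs_le x]
        · linarith [le_abs_self x]⟩
    exact le_antisymm ((measure_mono hcov).trans (by rw [measure_iUnion_null h])) zero_le
  obtain ⟨m0, hm0⟩ := h2
  set K := F ∩ Icc (-(m0 : ℝ)) m0 with hKdef
  have hKcomp : IsCompact K := isCompact_Icc.inter_left hFclosed
  have hKm : MeasurableSet K := hFclosed.measurableSet.inter measurableSet_Icc
  have hKs : K ⊆ s n0 := (inter_subset_left).trans hFs
  have hKB : K ⊆ B := hKs.trans (hsB n0)
  have hK0 : μ K ≠ 0 := hm0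
  have hKne : K.Nonempty := nonempty_of_measure_ne_zero hK0
  -- translates of K
  set T : ℝ → Set ℝ := fun b => (fun x => x + b) '' K with hTdef
  have hTpre : ∀ b, T b = (fun x => x - b) ⁻¹' K := by
    intro b
    ext x
    simp only [hTdef, mem_image, mem_preimage]
    constructor
    · rintro ⟨k, hk, rfl⟩; simpa using hk
    · intro h; exact ⟨x - b, h, by ring⟩
  have hTm : ∀ b, MeasurableSet (T b) := by
    intro b; rw [hTpre]; exact hKm.preimage (measurable_id.sub_const b)
  have hTμ : ∀ b, μ (T b) = μ K := fun b => hμ K hKm b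
  have hTsub : ∀ b ∈ B, T b ⊆ B := by
    rintro b hb x ⟨k, hk, rfl⟩
    exact hBB (Set.add_mem_add (hKB hk) hb)
  -- for each b in B some piece catches positive measure of T b
  have hTn : ∀ b ∈ B, ∃ n, μ (T b ∩ s n) ≠ 0 := by
    intro b hb
    by_contra h
    push_neg at h
    have hc : T b ⊆ ⋃ n, T b ∩ s n := by
      intro x hx
      obtain ⟨n, hn⟩ := mem_iUnion.mp (hBs ▸ hTsub b hb hx)
      exact mem_iUnion.mpr ⟨n, hx, hn⟩
    have : μ (T b) = 0 :=
      le_antisymm ((measure_mono hc).trans (by rw [measure_iUnion_null h])) zero_le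
    rw [hTμ] at this
    exact hK0 this
  -- for each n, a countable set of "centers" catching everything met by piece n
  have key : ∀ n : ℕ, ∃ C : Set ℝ, C ⊆ B ∧ C.Countable ∧
      ∀ b ∈ B, μ (T b ∩ s n) ≠ 0 → ∃ c ∈ C, b - c ∈ K - K := by
    intro n
    set Fn : Set ℝ := {b | b ∈ B ∧ μ (T b ∩ s n) ≠ 0} with hFndef
    set S : Set (Set ℝ) := {P | P ⊆ Fn ∧ P.Pairwise (fun a b => Disjoint (T a) (T b))} with hSdef
    obtain ⟨P, hPmax⟩ : ∃ P, Maximal (· ∈ S) P := by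
      apply zorn_subset
      intro c hcS hchain
      refine ⟨⋃₀ c, ⟨?_, ?_⟩, fun t ht => subset_sUnion_of_mem ht⟩
      · exact sUnion_subset fun t ht => (hcS ht).1
      · intro a ha b hb hab
        obtain ⟨Pa, hPa, haPa⟩ := ha
        obtain ⟨Pb, hPb, hbPb⟩ := hb
        rcases hchain.total hPa hPb with h | h
        · exact (hcS hPb).2 (h haPa) hbPb hab
        · exact (hcS hPa).2 haPa (h hbPb) hab
    have hPS := hPmax.1
    -- P is countable
    have hPcnt : P.Countable := by
      have hcnt : Set.Countable {i : P | 0 < μ ((fun p : P => T p ∩ s n) i)} := by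
        apply Measure.countable_meas_pos_of_disjoint_of_meas_iUnion_ne_top μ
        · exact fun i => (hTm i).inter (hsm n)
        · intro i j hij
          exact ((hPS.2 i.2 j.2 (Subtype.coe_injective.ne hij)).inter_left _).inter_right _
        · refine (lt_of_le_of_lt (measure_mono ?_) (hsfin n)).ne
          exact iUnion_subset fun i => inter_subset_right
      have heq : {i : P | 0 < μ ((fun p : P => T p ∩ s n) i)} = Set.univ := by
        apply eq_univ_of_forall
        intro i
        exact pos_iff_ne_zero.mpr (hPS.1 i.2).2
      rw [heq] at hcnt
      have : Countable P := Set.countable_univ_iff.mp hcnt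
      exact Set.countable_coe_iff.mp this
    refine ⟨P, fun p hp => (hPS.1 hp).1, hPcnt, ?_⟩
    intro b hb hbμ
    have hbFn : b ∈ Fn := ⟨hb, hbμ⟩
    by_cases hbP : b ∈ P
    · exact ⟨b, hbP, by simpa using Set.sub_mem_sub hKne.some_mem hKne.some_mem⟩
    · have : ∃ c ∈ P, ¬ Disjoint (T b) (T c) := by
        by_contra hcon
        push_neg at hcon
        have hQS : insert b P ∈ S := by
          constructor
          · exact insert_subset hbFn hPS.1
          · haveI : Std.Symm (fun x y => Disjoint (T x) (T y)) :=
              ⟨fun x y (h : Disjoint (T x) (T y)) => h.symm⟩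
            rw [Set.pairwise_insert_of_symm]
            exact ⟨hPS.2, fun c hc _ => hcon c hc⟩
        exact hbP (hPmax.2 hQS (subset_insert b P) (mem_insert b P))
      obtain ⟨c, hcP, hcd⟩ := this
      obtain ⟨x, hxb, hxc⟩ := Set.not_disjoint_iff.mp hcd
      obtain ⟨k1, hk1, hxe1⟩ := hxb
      obtain ⟨k2, hk2, hxe2⟩ := hxc
      refine ⟨c, hcP, ?_⟩
      have hkk : k1 + b = k2 + c := by
        have := hxe1.trans hxe2.symm
        simpa using this
      have : b - c = k2 - k1 := by linarith
      rw [this]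
      exact Set.sub_mem_sub hk2 hk1
  choose C hCB hCcnt hCcov using key
  set Call : Set ℝ := ⋃ n, C n with hCalldef
  have hCallB : Call ⊆ B := iUnion_subset hCB
  have hCallcnt : Call.Countable := countable_iUnion hCcnt
  have hcover : ∀ b ∈ B, ∃ c ∈ Call, b - c ∈ K - K := by
    intro b hb
    obtain ⟨n, hn⟩ := hTn b hb
    obtain ⟨c, hc, hbc⟩ := hCcov n b hb hn
    exact ⟨c, mem_iUnion.mpr ⟨n, hc⟩, hbc⟩
  -- the countable set of translations
  set D : Set ℝ := (fun p : ℝ × ℝ => p.1 - p.2) '' (Call ×ˢ Call) with hDdef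
  have hDcnt : D.Countable := (hCallcnt.prod hCallcnt).image _
  have hBne : B.Nonempty := nonempty_of_measure_ne_zero hμB
  have hDne : D.Nonempty := by
    obtain ⟨b, hb⟩ := hBne
    obtain ⟨c, hc, -⟩ := hcover b hb
    exact ⟨0, ⟨(c, c), ⟨hc, hc⟩, by simp⟩⟩
  set W : Set ℝ := (K - K) + (K - K) with hWdef
  have hWcomp : IsCompact W := (isCompact_sub' hKcomp hKcomp).add (isCompact_sub' hKcomp hKcomp)
  -- B - B is closed under addition
  have hGadd : ∀ x ∈ B - B, ∀ y ∈ B - B, x + y ∈ B - B := by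
    intro x hx y hy
    obtain ⟨a, ha, b, hb, rfl⟩ := Set.mem_sub.mp hx
    obtain ⟨c, hc, d, hd, rfl⟩ := Set.mem_sub.mp hy
    exact Set.mem_sub.mpr ⟨a + c, hBB (Set.add_mem_add ha hc),
      b + d, hBB (Set.add_mem_add hb hd), by ring⟩
  have hKKsub : K - K ⊆ B - B := Set.sub_subset_sub hKB hKB
  obtain ⟨f, hf⟩ := hDcnt.exists_eq_range hDne
  refine hFσ ⟨fun n => (fun x => f n + x) '' W, ?_, ?_⟩
  · intro n
    exact (hWcomp.image (continuous_add_left (f n))).isClosed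
  · apply Set.eq_of_subset_of_subset
    · intro x hx
      obtain ⟨b1, hb1, b2, hb2, rfl⟩ := Set.mem_sub.mp hx
      obtain ⟨c1, hc1, ht1⟩ := hcover b1 hb1
      obtain ⟨c2, hc2, ht2⟩ := hcover b2 hb2
      have hd : c1 - c2 ∈ D := ⟨(c1, c2), ⟨hc1, hc2⟩, rfl⟩
      rw [hf] at hd
      obtain ⟨n, hn⟩ := hd
      refine mem_iUnion.mpr ⟨n, ?_⟩
      refine ⟨(b1 - c1) - (b2 - c2), ?_, by rw [hn]; ring⟩
      obtain ⟨ka, hka, kb, hkb, he2⟩ := Set.mem_sub.mp ht2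
      have : (b1 - c1) - (b2 - c2) = (b1 - c1) + (kb - ka) := by
        rw [← he2] at *; ring
      rw [this]
      exact Set.add_mem_add ht1 (Set.sub_mem_sub hkb hka)
    · intro x hx
      obtain ⟨n, hn⟩ := mem_iUnion.mp hx
      obtain ⟨w, hw, rfl⟩ := hn
      have hfn : f n ∈ D := by rw [hf]; exact ⟨n, rfl⟩
      obtain ⟨⟨c1, c2⟩, ⟨hc1, hc2⟩, hfe⟩ := hfn
      have hdG : f n ∈ B - B := by
        rw [← hfe]
        exact Set.sub_mem_sub (hCallB hc1) (hCallB hc2)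
      obtain ⟨u, hu, v, hv, rfl⟩ := Set.mem_add.mp hw
      show f n + (u + v) ∈ B - B
      have heq : f n + (u + v) = (f n + u) + v := by ring
      rw [heq]
      exact hGadd _ (hGadd _ hdG _ (hKKsub hu)) _ (hKKsub hv)
end

section
/- Every Borel additive subgroup of ℝ that is not F_σ is immeasurable: for every translation invariant Borel measure μ on ℝ, it is either μ-null or not σ-finite for μ. -/
open MeasureTheory Set Filter Metric
open scoped ENNReal Pointwise Topology

theorem stmt13 (G : AddSubgroup ℝ) (hG : MeasurableSet (G : Set ℝ))
    (hFσ : ¬ ∃ F : ℕ → Set ℝ, (∀ n, IsClosed (F n)) ∧ (G : Set ℝ) = ⋃ n, F n) :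
    ∀ μ : Measure ℝ, TransInv μ →
      μ (G : Set ℝ) = 0 ∨ ¬ SigmaFiniteOn μ (G : Set ℝ) := by
  intro μ hinv
  by_contra hcon
  push_neg at hcon
  obtain ⟨hμG, s, hsm, hsfin, hsU⟩ := hcon
  -- each `s n` is contained in `G`
  have hsub : ∀ n, s n ⊆ (G : Set ℝ) := by
    intro n
    rw [hsU]
    exact subset_iUnion s n
  -- pick a piece of nonzero measure
  have hEx : ∃ n, μ (s n) ≠ 0 := by
    by_contra h
    push_neg at h
    apply hμG
    rw [hsU]
    exact le_antisymm ((measure_iUnion_le s).trans (by simp [h])) zero_le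
  obtain ⟨n, hn⟩ := hEx
  -- pick a bounded piece of nonzero measure
  have hEx2 : ∃ m : ℕ, μ (s n ∩ closedBall (0 : ℝ) m) ≠ 0 := by
    by_contra h
    push_neg at h
    apply hn
    have hcover : s n = ⋃ m : ℕ, s n ∩ closedBall (0 : ℝ) m := by
      rw [← inter_iUnion]
      refine (inter_eq_left.mpr ?_).symm
      intro x _
      rcases exists_nat_ge |x| with ⟨m, hm⟩
      exact mem_iUnion.mpr ⟨m, by simpa [Real.closedBall_eq_Icc, abs_le] using abs_le.mp hm⟩
    rw [hcover]
    exact le_antisymm ((measure_iUnion_le _).trans (by simp [h])) zero_le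
  obtain ⟨m, hm⟩ := hEx2
  set E' : Set ℝ := s n ∩ closedBall (0 : ℝ) m with hE'def
  have hE'm : MeasurableSet E' := (hsm n).inter measurableSet_closedBall
  have hE'fin : μ E' < ⊤ := lt_of_le_of_lt (measure_mono inter_subset_left) (hsfin n)
  -- restrict to get a finite measure, then use inner regularity by closed sets
  set ρ : Measure ℝ := μ.restrict E' with hρdef
  have hρfin : IsFiniteMeasure ρ := by
    constructor
    rw [hρdef, Measure.restrict_apply_univ]
    exact hE'fin
  have hρE' : ρ E' = μ E' := by
    rw [hρdef, Measure.restrict_apply hE'm, inter_self]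
  have hρE'pos : 0 < ρ E' := by
    rw [hρE']
    exact pos_iff_ne_zero.mpr hm
  obtain ⟨ε, hε0, hεlt⟩ := exists_between hρE'pos
  obtain ⟨K, hKE', hKcl, hKlt⟩ :=
    hE'm.exists_isClosed_lt_add (μ := ρ) (by rw [hρE']; exact hE'fin.ne) (ne_of_gt hε0)
  have hρK : ρ K = μ K := by
    rw [hρdef, Measure.restrict_apply hKcl.measurableSet, inter_eq_left.mpr hKE']
  -- K has positive measure
  have hKpos : 0 < μ K := by
    rw [← hρK]
    by_contra h
    push_neg at h
    have : ρ K = 0 := le_antisymm (by simpa using h) zero_le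
    rw [this, zero_add] at hKlt
    exact absurd hKlt (not_lt.mpr hεlt.le)
  have hKne : K.Nonempty := by
    rcases eq_empty_or_nonempty K with h | h
    · rw [h] at hKpos; simp at hKpos
    · exact h
  -- K is compact
  have hKcomp : IsCompact K :=
    Metric.isCompact_of_isClosed_isBounded hKcl
      ((isBounded_closedBall (x := (0 : ℝ)) (r := m)).subset
        (hKE'.trans inter_subset_right))
  have hKG : K ⊆ (G : Set ℝ) := hKE'.trans (inter_subset_left.trans (hsub n))
  -- difference set is a compact subset of G containing 0
  have hKKG : K - K ⊆ (G : Set ℝ) := by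
    rintro x hx
    rw [Set.mem_sub] at hx
    obtain ⟨a, ha, b, hb, rfl⟩ := hx
    exact sub_mem (hKG ha) (hKG hb)
  have h0KK : (0 : ℝ) ∈ K - K := by
    obtain ⟨k, hk⟩ := hKne
    exact ⟨k, hk, k, hk, sub_self k⟩
  have hKKsymm : ∀ x : ℝ, x ∈ K - K → -x ∈ K - K := by
    rintro x hx
    rw [Set.mem_sub] at hx ⊢
    obtain ⟨a, ha, b, hb, rfl⟩ := hx
    exact ⟨b, hb, a, ha, by ring⟩
  -- translates of K and their measures
  have himg : ∀ t : ℝ, ((· + t) '' K) = (fun x => x - t) ⁻¹' K := by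
    intro t
    ext x
    constructor
    · rintro ⟨k, hk, rfl⟩; simpa using hk
    · intro hx; exact ⟨x - t, hx, by ring⟩
  have hKt : ∀ t : ℝ, μ ((fun x => x - t) ⁻¹' K) = μ K := by
    intro t
    rw [← himg t]
    exact hinv K hKcl.measurableSet t
  have hKtm : ∀ t : ℝ, MeasurableSet ((fun x => x - t) ⁻¹' K) :=
    fun t => hKcl.measurableSet.preimage (measurable_sub_const t)
  -- Zorn's lemma: a maximal (K-K)-separated subset of G
  set S : Set (Set ℝ) :=
    {T | T ⊆ (G : Set ℝ) ∧ ∀ a ∈ T, ∀ b ∈ T, a ≠ b → a - b ∉ K - K} with hSdef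
  obtain ⟨T, hTmax⟩ := zorn_subset S (by
    intro c hcS hchain
    refine ⟨⋃₀ c, ⟨?_, ?_⟩, fun t ht => subset_sUnion_of_mem ht⟩
    · intro x hx
      obtain ⟨u, hu, hxu⟩ := hx
      exact (hcS hu).1 hxu
    · rintro a ⟨u, hu, hau⟩ b ⟨v, hv, hbv⟩ hab
      rcases hchain.total hu hv with h | h
      · exact (hcS hv).2 a (h hau) b hbv hab
      · exact (hcS hu).2 a hau b (h hbv) hab)
  have hTS : T ∈ S := hTmax.prop
  have hTG : T ⊆ (G : Set ℝ) := hTS.1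
  -- maximality: every element of G is within K - K of some element of T
  have hcover : ∀ g ∈ (G : Set ℝ), ∃ t ∈ T, g - t ∈ K - K := by
    intro g hg
    by_contra h
    push_neg at h
    have hins : insert g T ∈ S := by
      constructor
      · exact insert_subset hg hTG
      · rintro a (rfl | haT) b (rfl | hbT) hab
        · exact absurd rfl hab
        · exact h b hbT
        · intro hcon
          exact h a haT (by simpa using hKKsymm _ hcon)
        · exact hTS.2 a haT b hbT hab
    have : insert g T ⊆ T := hTmax.2 hins (subset_insert g T)
    have hgT : g ∈ T := this (mem_insert g T)
    exact h g hgT (by simpa using h0KK)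
  -- T is countable, via σ-finiteness of μ on G
  have hSF : SigmaFinite (μ.restrict (G : Set ℝ)) := by
    refine ⟨⟨⟨fun k => s k ∪ (G : Set ℝ)ᶜ, fun _ => trivial, ?_, ?_⟩⟩⟩
    · intro k
      rw [Measure.restrict_apply ((hsm k).union hG.compl)]
      refine lt_of_le_of_lt (measure_mono ?_) (hsfin k)
      rintro x ⟨hx1 | hx1, hx2⟩
      · exact hx1
      · exact absurd hx2 hx1
    · rw [eq_univ_iff_forall]
      intro x
      by_cases hx : x ∈ (G : Set ℝ)
      · rw [hsU] at hx
        obtain ⟨k, hk⟩ := mem_iUnion.mp hx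
        exact mem_iUnion.mpr ⟨k, Or.inl hk⟩
      · exact mem_iUnion.mpr ⟨0, Or.inr hx⟩
  have hTc : T.Countable := by
    have hdisj : Pairwise (Function.onFun Disjoint fun t : T => (fun x => x - (t : ℝ)) ⁻¹' K) := by
      rintro ⟨a, haT⟩ ⟨b, hbT⟩ hab
      have hab' : a ≠ b := fun h => hab (Subtype.ext h)
      refine Set.disjoint_left.mpr ?_
      intro x hxa hxb
      have : a - b ∈ K - K := ⟨x - b, hxb, x - a, hxa, by ring⟩
      exact hTS.2 a haT b hbT hab' this
    have hcnt := Measure.countable_meas_pos_of_disjoint_iUnion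
      (μ := μ.restrict (G : Set ℝ)) (fun t : T => hKtm t) hdisj
    have hall : ∀ t : T, 0 < (μ.restrict (G : Set ℝ)) ((fun x => x - (t : ℝ)) ⁻¹' K) := by
      intro t
      have hsubG : (fun x => x - (t : ℝ)) ⁻¹' K ⊆ (G : Set ℝ) := by
        intro x hx
        have hxG : x - (t : ℝ) ∈ (G : Set ℝ) := hKG hx
        have := AddSubgroup.add_mem G hxG (hTG t.2)
        simpa using this
      rw [Measure.restrict_apply (hKtm _), inter_eq_left.mpr hsubG, hKt]
      exact hKpos
    have : {t : T | 0 < (μ.restrict (G : Set ℝ)) ((fun x => x - (t : ℝ)) ⁻¹' K)} = univ :=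
      eq_univ_of_forall fun t => hall t
    rw [this] at hcnt
    exact Set.countable_coe_iff.mp (countable_univ_iff.mp hcnt)
  -- T is nonempty
  have hTne : T.Nonempty := by
    obtain ⟨t, htT, -⟩ := hcover 0 (AddSubgroup.zero_mem G)
    exact ⟨t, htT⟩
  obtain ⟨f, hf⟩ := hTc.exists_eq_range hTne
  -- G is F_σ: contradiction
  apply hFσ
  refine ⟨fun k => (fun x => x - f k) ⁻¹' (K - K), ?_, ?_⟩
  · intro k
    have hKKcomp : IsCompact (K - K) := by
      rw [sub_eq_add_neg]
      exact hKcomp.add hKcomp.neg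
    exact hKKcomp.isClosed.preimage (continuous_sub_right (f k))
  · ext x
    constructor
    · intro hx
      obtain ⟨t, htT, hd⟩ := hcover x hx
      rw [hf] at htT
      obtain ⟨k, rfl⟩ := htT
      exact mem_iUnion.mpr ⟨k, hd⟩
    · intro hx
      obtain ⟨k, hk⟩ := mem_iUnion.mp hx
      have h1 : x - f k ∈ (G : Set ℝ) := hKKG hk
      have h2 : f k ∈ (G : Set ℝ) := hTG (hf ▸ mem_range_self k)
      have := AddSubgroup.add_mem G h1 h2
      simpa using this
end

section
/- Let BE(1,0) = {x ∈ ℝ : the dyadic digits d₁d₂… of the fractional part of x satisfy lim_{n→∞} #{i ≤ n : dᵢ = 1}/n = 0}, and let G = {x ∈ ℝ : {n : d_n ≠ d_{n+1}} has density zero}. Then BE(1,0) − BE(1,0) = G. -/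
open MeasureTheory Set Filter Metric
open scoped ENNReal Pointwise Topology

/-- The `i`-th binary digit (`i ≥ 1`) of the fractional part of `x`
(this picks the expansion with finitely many nonzero digits when ambiguous). -/
noncomputable def binDigit (x : ℝ) (i : ℕ) : ℤ := ⌊Int.fract x * 2 ^ i⌋ % 2

/-- The Besicovitch–Eggleston class `BE(1,0)`: reals whose binary digits
contain `1`'s only on a set of density zero. -/
def BE10 : Set ℝ :=
  {x : ℝ | Tendsto
    (fun n : ℕ => (((Finset.Icc 1 n).filter (fun i => binDigit x i = 1)).card : ℝ) / n)
    atTop (𝓝 0)}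

/-- The set of reals whose binary digits satisfy `d_n = d_{n+1}` for all `n`
outside a set of density zero. -/
def GSet : Set ℝ :=
  {x : ℝ | Tendsto
    (fun n : ℕ => (((Finset.Icc 1 n).filter (fun i => binDigit x i ≠ binDigit x (i + 1))).card : ℝ) / n)
    atTop (𝓝 0)}

section BEG

lemma binDigit_mem (x : ℝ) (i : ℕ) : binDigit x i = 0 ∨ binDigit x i = 1 := by
  unfold binDigit; omega

lemma floor_cases {t : ℝ} (h1 : -1 < t) (h2 : t < 1) : ⌊t⌋ = if t < 0 then -1 else 0 := by
  split_ifs with h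
  · refine Int.floor_eq_iff.mpr ?_ -- maybe needs different form
    constructor <;> push_cast <;> linarith
  · refine Int.floor_eq_iff.mpr ?_
    constructor <;> push_cast <;> [linarith; linarith]

lemma digit_rec (w : ℝ) (i : ℕ) :
    ⌊Int.fract w * 2^(i+1)⌋ = 2 * ⌊Int.fract w * 2^i⌋ + binDigit w (i+1) ∧
    Int.fract (Int.fract w * 2^(i+1)) = 2 * Int.fract (Int.fract w * 2^i) - binDigit w (i+1) := by
  set t := Int.fract w * 2^i with ht
  have key : Int.fract w * 2^(i+1) = (2*⌊t⌋ : ℤ) + 2*Int.fract t := by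
    push_cast
    have : (⌊t⌋ : ℝ) + Int.fract t = t := Int.floor_add_fract t
    rw [ht]; ring_nf
    nlinarith [this]
  have hfl : ⌊Int.fract w * 2^(i+1)⌋ = 2*⌊t⌋ + ⌊2*Int.fract t⌋ := by
    rw [key, Int.floor_intCast_add]
  have hd2 : ⌊2*Int.fract t⌋ = 0 ∨ ⌊2*Int.fract t⌋ = 1 := by
    have h1 : (0:ℝ) ≤ 2*Int.fract t := by have := Int.fract_nonneg t; linarith
    have h2 : 2*Int.fract t < 2 := by have := Int.fract_lt_one t; linarith
    have := Int.floor_nonneg.mpr h1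
    have : ⌊2*Int.fract t⌋ < 2 := by
      have := Int.floor_le (2*Int.fract t)
      exact_mod_cast Int.floor_lt.mpr (by exact_mod_cast h2)
    omega
  have hbd : binDigit w (i+1) = ⌊2*Int.fract t⌋ := by
    unfold binDigit
    rw [hfl]; omega
  constructor
  · rw [hfl, hbd]
  · have : Int.fract (Int.fract w * 2^(i+1)) = Int.fract w * 2^(i+1) - ⌊Int.fract w * 2^(i+1)⌋ :=
      (Int.self_sub_floor _).symm
    rw [this, hfl, key, hbd]
    push_cast
    ring

lemma digit_rec0 (w : ℝ) (i : ℕ) (h : binDigit w (i+1) = 0) :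
    ⌊Int.fract w * 2^(i+1)⌋ = 2 * ⌊Int.fract w * 2^i⌋ ∧
    Int.fract (Int.fract w * 2^(i+1)) = 2 * Int.fract (Int.fract w * 2^i) := by
  obtain ⟨h1, h2⟩ := digit_rec w i
  rw [h] at h1 h2
  constructor
  · omega
  · rw [h2]; push_cast; ring

lemma fract_sub_eq (x y : ℝ) :
    Int.fract (x - y) = Int.fract x - Int.fract y +
      (if Int.fract x < Int.fract y then 1 else 0) := by
  have hx : x = Int.fract x + ⌊x⌋ := by rw [add_comm]; exact (Int.floor_add_fract x).symm
  have hy : y = Int.fract y + ⌊y⌋ := by rw [add_comm]; exact (Int.floor_add_fract y).symm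
  have hxy : x - y = (Int.fract x - Int.fract y) + ((⌊x⌋ - ⌊y⌋ : ℤ) : ℝ) := by
    push_cast; linarith
  rw [hxy, Int.fract_add_intCast]
  have h1 := Int.fract_nonneg x
  have h2 := Int.fract_lt_one x
  have h3 := Int.fract_nonneg y
  have h4 := Int.fract_lt_one y
  split_ifs with h
  · have : Int.fract (Int.fract x - Int.fract y) = Int.fract (Int.fract x - Int.fract y + 1) := by
      rw [show (1:ℝ) = ((1:ℤ):ℝ) by norm_num, Int.fract_add_intCast]
    rw [this, Int.fract_eq_self.mpr ⟨by linarith, by linarith⟩]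
  · rw [Int.fract_eq_self.mpr ⟨by linarith, by linarith⟩]; ring

lemma sub_digit_key (x y : ℝ) (i : ℕ) (hi : 1 ≤ i)
    (hx1 : binDigit x i = 0) (hx2 : binDigit x (i+1) = 0)
    (hy1 : binDigit y i = 0) (hy2 : binDigit y (i+1) = 0) :
    binDigit (x - y) i = binDigit (x - y) (i+1) := by
  set a := Int.fract x with ha
  set b := Int.fract y with hb
  set c : ℤ := if a < b then 1 else 0 with hc
  have hfr : Int.fract (x - y) = a - b + (c : ℝ) := by
    rw [fract_sub_eq x y, hc]; split_ifs <;> norm_num <;> rfl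
  -- floors and fracts
  set A := ⌊a * 2^i⌋ with hA
  set B := ⌊b * 2^i⌋ with hB
  set al := Int.fract (a * 2^i) with hal
  set be := Int.fract (b * 2^i) with hbe
  have hxa : a * 2^i = (A : ℝ) + al := by rw [hA, hal]; exact (Int.floor_add_fract _).symm
  have hyb : b * 2^i = (B : ℝ) + be := by rw [hB, hbe]; exact (Int.floor_add_fract _).symm
  -- key floor formula at level j given decompositions
  have key : ∀ (j : ℕ) (A' B' : ℤ) (al' be' : ℝ), a * 2^j = (A' : ℝ) + al' → b * 2^j = (B' : ℝ) + be' →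
      0 ≤ al' → al' < 1 → 0 ≤ be' → be' < 1 →
      binDigit (x-y) j = (A' - B' + c * 2^j + (if al' < be' then (-1 : ℤ) else 0)) % 2 := by
    intro j A' B' al' be' hxa' hyb' h1 h2 h3 h4
    have hval : Int.fract (x-y) * 2^j = ((A' - B' + c * 2^j : ℤ) : ℝ) + (al' - be') := by
      rw [hfr]; push_cast; nlinarith [hxa', hyb']
    have hfloor : ⌊Int.fract (x-y) * 2^j⌋ = (A' - B' + c * 2^j) + ⌊al' - be'⌋ := by
      rw [hval, Int.floor_intCast_add]
    have hflab : ⌊al' - be'⌋ = if al' - be' < 0 then (-1:ℤ) else 0 :=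
      floor_cases (by linarith) (by linarith)
    unfold binDigit
    rw [hfloor, hflab]
    congr 2
    simp only [sub_neg]
  have h2i : (2:ℤ) ^ i % 2 = 0 := by
    obtain ⟨k, hk⟩ : ∃ k, i = k + 1 := ⟨i - 1, by omega⟩
    subst hk; rw [pow_succ]; omega
  -- digit at i
  have hdi : binDigit (x-y) i = (A - B + c * 2^i + (if al < be then (-1 : ℤ) else 0)) % 2 :=
    key i A B al be hxa hyb (Int.fract_nonneg _) (Int.fract_lt_one _) (Int.fract_nonneg _) (Int.fract_lt_one _)
  -- level i+1 decomposition
  obtain ⟨hfx, hfx2⟩ := digit_rec0 x i hx2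
  obtain ⟨hfy, hfy2⟩ := digit_rec0 y i hy2
  have hxa2 : a * 2^(i+1) = ((2*A : ℤ) : ℝ) + 2*al := by
    have : a * 2^(i+1) = (a * 2^i) * 2 := by ring
    rw [this, hxa]; push_cast; ring
  have hyb2 : b * 2^(i+1) = ((2*B : ℤ) : ℝ) + 2*be := by
    have : b * 2^(i+1) = (b * 2^i) * 2 := by ring
    rw [this, hyb]; push_cast; ring
  have hal2 : 2 * al < 1 := by
    have := hfx2; rw [← ha] at this
    have h5 := Int.fract_lt_one (a * 2^(i+1))
    rw [this] at h5; linarith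
  have hbe2 : 2 * be < 1 := by
    have := hfy2; rw [← hb] at this
    have h5 := Int.fract_lt_one (b * 2^(i+1))
    rw [this] at h5; linarith
  have hdi2 : binDigit (x-y) (i+1) = (2*A - 2*B + c * 2^(i+1) + (if 2*al < 2*be then (-1 : ℤ) else 0)) % 2 :=
    key (i+1) (2*A) (2*B) (2*al) (2*be) hxa2 hyb2
      (by have := Int.fract_nonneg (a*2^i); rw [← hal] at this; linarith) hal2
      (by have := Int.fract_nonneg (b*2^i); rw [← hbe] at this; linarith) hbe2
  have hcond : (if 2*al < 2*be then (-1 : ℤ) else 0) = (if al < be then (-1 : ℤ) else 0) := by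
    congr 1; simp only [eq_iff_iff]; constructor <;> intro <;> linarith
  rw [hdi, hdi2, hcond]
  have hAe : A % 2 = 0 := hx1
  have hBe : B % 2 = 0 := hy1
  obtain ⟨k, hk⟩ : ∃ k : ℤ, c * 2^i = 2 * k := by
    obtain ⟨j, hj⟩ : ∃ j, i = j + 1 := ⟨i - 1, by omega⟩
    exact ⟨c * 2^j, by rw [hj, pow_succ]; ring⟩
  have hk2 : c * 2^(i+1) = 2 * (2 * k) := by rw [pow_succ]; nlinarith [hk]
  split_ifs <;> omega

open Filter in
lemma tendsto_ratio_succ : Filter.Tendsto (fun n : ℕ => ((n:ℝ)+1)/n) Filter.atTop (nhds 1) := by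
  have h1 : Filter.Tendsto (fun n : ℕ => 1 + 1/(n:ℝ)) Filter.atTop (nhds 1) := by
    have := tendsto_one_div_atTop_nhds_zero_nat (𝕜 := ℝ)
    simpa using tendsto_const_nhds.add this
  apply h1.congr'
  filter_upwards [Filter.eventually_ge_atTop 1] with n hn
  have : (n:ℝ) ≠ 0 := Nat.cast_ne_zero.mpr (by omega)
  field_simp

lemma ratio_shift (c : ℕ → ℕ) (h : Filter.Tendsto (fun n : ℕ => (c n : ℝ)/n) Filter.atTop (nhds 0)) :
    Filter.Tendsto (fun n : ℕ => (c (n+1) : ℝ)/n) Filter.atTop (nhds 0) := by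
  have h1 : Filter.Tendsto (fun n : ℕ => ((c (n+1) : ℝ)/(n+1)) * (((n:ℝ)+1)/n)) Filter.atTop (nhds 0) := by
    have h2 : Filter.Tendsto (fun n : ℕ => (c (n+1) : ℝ)/(n+1)) Filter.atTop (nhds 0) := by
      have h3 := h.comp (Filter.tendsto_add_atTop_nat 1)
      apply h3.congr
      intro n
      simp only [Function.comp]
      push_cast
      ring_nf
    simpa using h2.mul tendsto_ratio_succ
  apply h1.congr
  intro n
  rcases Nat.eq_zero_or_pos n with h0 | h0
  · subst h0; simp
  · have : (n:ℝ) ≠ 0 := Nat.cast_ne_zero.mpr (by omega)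
    field_simp

noncomputable def cnt (w : ℝ) (n : ℕ) : ℕ := ((Finset.Icc 1 n).filter (fun i => binDigit w i = 1)).card
noncomputable def chg (z : ℝ) (n : ℕ) : ℕ := ((Finset.Icc 1 n).filter (fun i => binDigit z i ≠ binDigit z (i + 1))).card

lemma cnt_shift_le (w : ℝ) (n : ℕ) :
    ((Finset.Icc 1 n).filter (fun i => binDigit w (i+1) = 1)).card ≤ cnt w (n+1) := by
  apply Finset.card_le_card_of_injOn (fun i => i + 1)
  · intro i hi
    simp only [Finset.mem_coe, Finset.mem_filter, Finset.mem_Icc] at hi ⊢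
    exact ⟨⟨by omega, by omega⟩, hi.2⟩
  · intro i _ j _ h
    simpa using h

lemma cnt_mono (w : ℝ) (n : ℕ) : cnt w n ≤ cnt w (n+1) := by
  apply Finset.card_le_card
  intro i hi
  simp only [Finset.mem_filter, Finset.mem_Icc] at hi ⊢
  exact ⟨⟨hi.1.1, by omega⟩, hi.2⟩

lemma chg_le (x y : ℝ) (n : ℕ) :
    chg (x - y) n ≤ 2 * cnt x (n+1) + 2 * cnt y (n+1) := by
  classical
  have hsub : (Finset.Icc 1 n).filter (fun i => binDigit (x-y) i ≠ binDigit (x-y) (i + 1)) ⊆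
      ((Finset.Icc 1 n).filter (fun i => binDigit x i = 1)) ∪
      ((Finset.Icc 1 n).filter (fun i => binDigit x (i+1) = 1)) ∪
      ((Finset.Icc 1 n).filter (fun i => binDigit y i = 1)) ∪
      ((Finset.Icc 1 n).filter (fun i => binDigit y (i+1) = 1)) := by
    intro i hi
    simp only [Finset.mem_filter, Finset.mem_Icc, Finset.mem_union] at hi ⊢
    obtain ⟨⟨h1, h2⟩, h3⟩ := hi
    by_contra hcon
    push_neg at hcon
    have e1 : binDigit x i = 0 := by rcases binDigit_mem x i with h|h; exact h; tauto
    have e2 : binDigit x (i+1) = 0 := by rcases binDigit_mem x (i+1) with h|h; exact h; tauto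
    have e3 : binDigit y i = 0 := by rcases binDigit_mem y i with h|h; exact h; tauto
    have e4 : binDigit y (i+1) = 0 := by rcases binDigit_mem y (i+1) with h|h; exact h; tauto
    exact h3 (sub_digit_key x y i h1 e1 e2 e3 e4)
  have hcard := Finset.card_le_card hsub
  have hu : (((Finset.Icc 1 n).filter (fun i => binDigit x i = 1)) ∪
      ((Finset.Icc 1 n).filter (fun i => binDigit x (i+1) = 1)) ∪
      ((Finset.Icc 1 n).filter (fun i => binDigit y i = 1)) ∪
      ((Finset.Icc 1 n).filter (fun i => binDigit y (i+1) = 1))).card ≤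
      ((Finset.Icc 1 n).filter (fun i => binDigit x i = 1)).card +
      ((Finset.Icc 1 n).filter (fun i => binDigit x (i+1) = 1)).card +
      ((Finset.Icc 1 n).filter (fun i => binDigit y i = 1)).card +
      ((Finset.Icc 1 n).filter (fun i => binDigit y (i+1) = 1)).card := by
    calc _ ≤ _ := Finset.card_union_le _ _
    _ ≤ _ := by
      gcongr ?_ + _
      calc _ ≤ _ := Finset.card_union_le _ _
      _ ≤ _ := by
        gcongr ?_ + _
        exact Finset.card_union_le _ _
  have b1 : ((Finset.Icc 1 n).filter (fun i => binDigit x i = 1)).card ≤ cnt x (n+1) :=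
    le_trans (le_refl _) (cnt_mono x n)
  have b2 := cnt_shift_le x n
  have b3 : ((Finset.Icc 1 n).filter (fun i => binDigit y i = 1)).card ≤ cnt y (n+1) :=
    le_trans (le_refl _) (cnt_mono y n)
  have b4 := cnt_shift_le y n
  unfold chg
  omega

lemma tendsto_cnt_shift {w : ℝ}
    (h : Filter.Tendsto (fun n : ℕ => (cnt w n : ℝ)/n) Filter.atTop (nhds 0)) :
    Filter.Tendsto (fun n : ℕ => (cnt w (n+1) : ℝ)/n) Filter.atTop (nhds 0) :=
  ratio_shift (cnt w) h

lemma sub_mem_G (x y : ℝ)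
    (hx : Filter.Tendsto (fun n : ℕ => (cnt x n : ℝ)/n) Filter.atTop (nhds 0))
    (hy : Filter.Tendsto (fun n : ℕ => (cnt y n : ℝ)/n) Filter.atTop (nhds 0)) :
    Filter.Tendsto (fun n : ℕ => (chg (x - y) n : ℝ)/n) Filter.atTop (nhds 0) := by
  have hup : Filter.Tendsto (fun n : ℕ => 2*((cnt x (n+1) : ℝ)/n) + 2*((cnt y (n+1) : ℝ)/n))
      Filter.atTop (nhds 0) := by
    have := ((tendsto_cnt_shift hx).const_mul 2).add ((tendsto_cnt_shift hy).const_mul 2)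
    simpa using this
  apply tendsto_of_tendsto_of_tendsto_of_le_of_le (tendsto_const_nhds (x := (0:ℝ))) hup
  · intro n; positivity
  · intro n
    rcases Nat.eq_zero_or_pos n with h0 | h0
    · subst h0; simp
    · have hn : (0:ℝ) < n := by exact_mod_cast h0
      have := chg_le x y n
      have h2 : (chg (x-y) n : ℝ) ≤ 2 * (cnt x (n+1) : ℝ) + 2 * (cnt y (n+1) : ℝ) := by
        exact_mod_cast this
      calc (chg (x-y) n : ℝ)/n ≤ (2 * (cnt x (n+1) : ℝ) + 2 * (cnt y (n+1) : ℝ))/n := by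
            gcongr
        _ = 2*((cnt x (n+1) : ℝ)/n) + 2*((cnt y (n+1) : ℝ)/n) := by ring

lemma summable_digits {g : ℕ → ℤ} (hg : ∀ i, g i = 0 ∨ g i = 1) :
    Summable (fun i : ℕ => (g i : ℝ)/2^i) := by
  apply Summable.of_nonneg_of_le (f := fun i : ℕ => ((1:ℝ)/2)^i)
  · intro i; rcases hg i with h|h <;> rw [h] <;> positivity
  · intro i
    rw [div_pow, one_pow]
    have h1 : (g i : ℝ) ≤ 1 := by rcases hg i with h|h <;> rw [h] <;> norm_num
    gcongr
  · exact summable_geometric_two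

lemma binDigit01' (t : ℝ) (i : ℕ) : binDigit t i = 0 ∨ binDigit t i = 1 := binDigit_mem t i

lemma expansion (t : ℝ) :
    HasSum (fun m : ℕ => (binDigit t (m+1) : ℝ)/2^(m+1)) (Int.fract t) := by
  set f : ℕ → ℝ := fun m => (binDigit t (m+1) : ℝ)/2^(m+1) with hf
  have hsumm : Summable f := by
    have := summable_digits (g := fun m => binDigit t (m+1)) (fun i => binDigit_mem t (i+1))
    apply Summable.of_nonneg_of_le _ _ this
    · intro m
      have hd : (0:ℝ) ≤ (binDigit t (m+1) : ℝ) := by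
        rcases binDigit_mem t (m+1) with h|h <;> rw [h] <;> norm_num
      rw [hf]; positivity
    · intro m
      have hd : (0:ℝ) ≤ (binDigit t (m+1) : ℝ) := by
        rcases binDigit_mem t (m+1) with h|h <;> rw [h] <;> norm_num
      rw [hf]
      simp only
      gcongr
      · norm_num
      · omega
  -- partial sums equal F n / 2^n
  have hstep : ∀ m : ℕ, f m = (⌊Int.fract t * 2^(m+1)⌋ : ℝ)/2^(m+1) - (⌊Int.fract t * 2^m⌋ : ℝ)/2^m := by
    intro m
    obtain ⟨h1, _⟩ := digit_rec t m
    rw [hf]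
    simp only
    rw [h1]
    push_cast
    field_simp
    ring
  have hpart : ∀ n : ℕ, ∑ m ∈ Finset.range n, f m = (⌊Int.fract t * 2^n⌋ : ℝ)/2^n := by
    intro n
    calc ∑ m ∈ Finset.range n, f m
        = ∑ m ∈ Finset.range n, ((fun k => (⌊Int.fract t * 2^k⌋ : ℝ)/2^k) (m+1) -
            (fun k => (⌊Int.fract t * 2^k⌋ : ℝ)/2^k) m) := by
          apply Finset.sum_congr rfl; intro m _; exact hstep m
      _ = (⌊Int.fract t * 2^n⌋ : ℝ)/2^n - (⌊Int.fract t * 2^0⌋ : ℝ)/2^0 := by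
          simpa using Finset.sum_range_sub (fun k => (⌊Int.fract t * 2^k⌋ : ℝ)/2^k) n
      _ = (⌊Int.fract t * 2^n⌋ : ℝ)/2^n := by
          simp [Int.floor_fract]
  -- partial sums tend to fract t
  have htend : Filter.Tendsto (fun n : ℕ => ∑ m ∈ Finset.range n, f m) Filter.atTop (nhds (Int.fract t)) := by
    have hub : ∀ n : ℕ, |∑ m ∈ Finset.range n, f m - Int.fract t| ≤ ((1:ℝ)/2)^n := by
      intro n
      rw [hpart n]
      have h1 : Int.fract t * 2^n - ⌊Int.fract t * 2^n⌋ = Int.fract (Int.fract t * 2^n) :=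
        Int.self_sub_floor _
      have h2 := Int.fract_nonneg (Int.fract t * 2^n)
      have h3 := Int.fract_lt_one (Int.fract t * 2^n)
      have hp : (0:ℝ) < 2^n := by positivity
      have heq : (⌊Int.fract t * 2^n⌋ : ℝ)/2^n - Int.fract t
          = -(Int.fract (Int.fract t * 2^n)/2^n) := by
        field_simp
        linarith [h1]
      rw [heq, abs_neg, abs_of_nonneg (by positivity)]
      rw [div_pow, one_pow]
      gcongr
    have h0 : Filter.Tendsto (fun n : ℕ => ((1:ℝ)/2)^n) Filter.atTop (nhds 0) := by
      apply tendsto_pow_atTop_nhds_zero_of_lt_one <;> norm_num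
    rw [tendsto_iff_dist_tendsto_zero]
    apply squeeze_zero (fun n => dist_nonneg) _ h0
    intro n
    rw [Real.dist_eq]
    exact hub n
  have := hsumm.hasSum
  have h2 := this.tendsto_sum_nat
  rwa [tendsto_nhds_unique h2 htend] at this

lemma floor_indicator {g : ℕ → ℤ} (hg : ∀ i, g i = 0 ∨ g i = 1)
    (hcons : ∀ i, g i = 1 → g (i+1) = 0) (m : ℕ) :
    ⌊(∑' i : ℕ, (g i : ℝ)/2^i) * 2^m⌋ = ∑ i ∈ Finset.range (m+1), g i * 2^(m-i) := by
  have hs := summable_digits hg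
  have hsplit := (Summable.sum_add_tsum_nat_add (f := fun i : ℕ => (g i : ℝ)/2^i) (m+1) hs).symm
  set T : ℝ := ∑' k : ℕ, (g (k + (m+1)) : ℝ)/2^(k+1) with hT
  have hxval : (∑' i : ℕ, (g i : ℝ)/2^i) * 2^m
      = ((∑ i ∈ Finset.range (m+1), g i * 2^(m-i) : ℤ) : ℝ) + T := by
    rw [hsplit, add_mul, Finset.sum_mul]
    congr 1
    · push_cast
      apply Finset.sum_congr rfl
      intro i hi
      rw [Finset.mem_range] at hi
      have hle : i ≤ m := by omega
      have : (2:ℝ)^m = 2^(m-i) * 2^i := by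
        rw [← pow_add]; congr 1; omega
      rw [this]
      have hp : (2:ℝ)^i ≠ 0 := by positivity
      field_simp
    · rw [hT, ← tsum_mul_right]
      apply tsum_congr
      intro k
      have h2 : (2:ℝ)^(k+(m+1)) = 2^(k+1) * 2^m := by
        rw [← pow_add]; congr 1; omega
      rw [h2]
      have hp1 : (2:ℝ)^(k+1) ≠ 0 := by positivity
      have hp2 : (2:ℝ)^m ≠ 0 := by positivity
      field_simp
  have hT0 : 0 ≤ T := by
    apply tsum_nonneg
    intro k
    have : (0:ℝ) ≤ (g (k+(m+1)) : ℝ) := by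
      rcases hg (k+(m+1)) with h|h <;> rw [h] <;> norm_num
    positivity
  have hT1 : T < 1 := by
    obtain ⟨k0, hk0le, hk0⟩ : ∃ k0, k0 ≤ 1 ∧ g (k0 + (m+1)) = 0 := by
      rcases hg (m+1) with h|h
      · exact ⟨0, le_refl _ |>.trans (by norm_num), by simpa using h⟩
      · refine ⟨1, le_refl 1, ?_⟩
        have := hcons (m+1) h
        simpa [Nat.add_comm] using this
    have hv : Summable (fun k : ℕ => ((1:ℝ)/2)^(k+1)) := by
      exact summable_geometric_two.comp_injective (add_left_injective 1)
    have hu : Summable (fun k : ℕ => if k = k0 then (0:ℝ) else ((1:ℝ)/2)^(k+1)) := by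
      apply Summable.of_nonneg_of_le _ _ hv
      · intro k; split_ifs <;> positivity
      · intro k
        split_ifs
        · positivity
        · exact le_rfl
    have hle : T ≤ ∑' k : ℕ, (if k = k0 then (0:ℝ) else ((1:ℝ)/2)^(k+1)) := by
      refine Summable.tsum_le_tsum ?_ ?_ hu
      · intro k
        split_ifs with hk
        · subst hk; rw [hk0]; norm_num
        · rw [div_pow, one_pow]
          have h1 : (g (k+(m+1)) : ℝ) ≤ 1 := by
            rcases hg (k+(m+1)) with h|h <;> rw [h] <;> norm_num
          gcongr
      · apply Summable.of_nonneg_of_le _ _ hv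
        · intro k
          have : (0:ℝ) ≤ (g (k+(m+1)) : ℝ) := by
            rcases hg (k+(m+1)) with h|h <;> rw [h] <;> norm_num
          positivity
        · intro k
          rw [div_pow, one_pow]
          have h1 : (g (k+(m+1)) : ℝ) ≤ 1 := by
            rcases hg (k+(m+1)) with h|h <;> rw [h] <;> norm_num
          gcongr
    have hvsum : ∑' k : ℕ, ((1:ℝ)/2)^(k+1) = 1 := by
      have : (fun k : ℕ => ((1:ℝ)/2)^(k+1)) = (fun k : ℕ => (1/2) * ((1:ℝ)/2)^k) := by
        funext k; rw [pow_succ]; ring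
      rw [this, tsum_mul_left, tsum_geometric_two]
      norm_num
    have hite := Summable.tsum_eq_add_tsum_ite hv k0
    have husum : ∑' k : ℕ, (if k = k0 then (0:ℝ) else ((1:ℝ)/2)^(k+1)) = 1 - ((1:ℝ)/2)^(k0+1) := by
      linarith [hite, hvsum]
    have hk0b : ((1:ℝ)/2)^(k0+1) ≥ 1/4 := by
      interval_cases k0 <;> norm_num
    calc T ≤ 1 - ((1:ℝ)/2)^(k0+1) := by rw [← husum]; exact hle
      _ < 1 := by linarith
  rw [hxval, Int.floor_intCast_add, Int.floor_eq_zero_iff.mpr ⟨hT0, hT1⟩, add_zero]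

lemma binDigit_indicator {g : ℕ → ℤ} (hg : ∀ i, g i = 0 ∨ g i = 1)
    (hcons : ∀ i, g i = 1 → g (i+1) = 0) (m : ℕ) (hm : 1 ≤ m) :
    binDigit (∑' i : ℕ, (g i : ℝ)/2^i) m = g m := by
  set x : ℝ := ∑' i : ℕ, (g i : ℝ)/2^i with hx
  have hfl0 : ⌊x⌋ = g 0 := by
    have := floor_indicator hg hcons 0
    simpa using this
  have hfr : Int.fract x = x - (g 0 : ℝ) := by
    rw [Int.fract, hfl0]
  have hflm : ⌊Int.fract x * 2^m⌋ = (∑ i ∈ Finset.range (m+1), g i * 2^(m-i)) - g 0 * 2^m := by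
    rw [hfr, sub_mul]
    have : (g 0 : ℝ) * 2^m = ((g 0 * 2^m : ℤ) : ℝ) := by push_cast; ring
    rw [this, Int.floor_sub_intCast, floor_indicator hg hcons m]
  unfold binDigit
  rw [hflm]
  have hsum : ∑ i ∈ Finset.range (m+1), g i * 2^(m-i)
      = (∑ i ∈ Finset.range m, g i * 2^(m-i)) + g m := by
    rw [Finset.sum_range_succ]
    simp
  have heven : ∑ i ∈ Finset.range m, g i * 2^(m-i) = 2 * ∑ i ∈ Finset.range m, g i * 2^(m-i-1) := by
    rw [Finset.mul_sum]
    apply Finset.sum_congr rfl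
    intro i hi
    rw [Finset.mem_range] at hi
    have : (2:ℤ)^(m-i) = 2 * 2^(m-i-1) := by
      rw [← pow_succ']
      congr 1
      omega
    rw [this]; ring
  have h0even : g 0 * 2^m = 2 * (g 0 * 2^(m-1)) := by
    have : (2:ℤ)^m = 2 * 2^(m-1) := by
      rw [← pow_succ']; congr 1; omega
    rw [this]; ring
  rcases hg m with h|h <;> rw [hsum, heven, h0even, h] <;> omega

lemma G_decomp (z : ℝ)
    (hz : Filter.Tendsto (fun n : ℕ => (chg z n : ℝ)/n) Filter.atTop (nhds 0)) :
    ∃ x y : ℝ,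
      Filter.Tendsto (fun n : ℕ => (cnt x n : ℝ)/n) Filter.atTop (nhds 0) ∧
      Filter.Tendsto (fun n : ℕ => (cnt y n : ℝ)/n) Filter.atTop (nhds 0) ∧
      x - y = z := by
  classical
  set e : ℕ → ℤ := fun i => if i = 0 then 0 else binDigit z i with he
  have e01 : ∀ i, e i = 0 ∨ e i = 1 := by
    intro i
    by_cases hi : i = 0
    · left; simp [he, hi]
    · simpa [he, hi] using binDigit_mem z i
  set g : ℕ → ℤ := fun i => max (e (i+1) - e i) 0 with hgdef
  set h : ℕ → ℤ := fun i => max (e i - e (i+1)) 0 with hhdef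
  have g01 : ∀ i, g i = 0 ∨ g i = 1 := by
    intro i; rcases e01 i with h1|h1 <;> rcases e01 (i+1) with h2|h2 <;>
      simp [hgdef, h1, h2]
  have h01 : ∀ i, h i = 0 ∨ h i = 1 := by
    intro i; rcases e01 i with h1|h1 <;> rcases e01 (i+1) with h2|h2 <;>
      simp [hhdef, h1, h2]
  have gcons : ∀ i, g i = 1 → g (i+1) = 0 := by
    intro i hgi
    have h2 : e (i+1) = 1 := by
      rcases e01 i with h1|h1 <;> rcases e01 (i+1) with h2|h2 <;>
        simp [hgdef, h1, h2] at hgi ⊢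
    have h4 : e (i+1+1) = e (i+2) := rfl
    rcases e01 (i+2) with h3|h3 <;> simp [hgdef, h2, h4, h3]
  have hcons : ∀ i, h i = 1 → h (i+1) = 0 := by
    intro i hhi
    have h2 : e (i+1) = 0 := by
      rcases e01 i with h1|h1 <;> rcases e01 (i+1) with h2|h2 <;>
        simp [hhdef, h1, h2] at hhi ⊢
    have h4 : e (i+1+1) = e (i+2) := rfl
    rcases e01 (i+2) with h3|h3 <;> simp [hhdef, h2, h4, h3]
  set x0 : ℝ := ∑' i : ℕ, (g i : ℝ)/2^i with hx0
  set y0 : ℝ := ∑' i : ℕ, (h i : ℝ)/2^i with hy0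
  have sg := summable_digits g01
  have sh := summable_digits h01
  -- x0 - y0 = fract z
  have hA : HasSum (fun i : ℕ => (e (i+1) : ℝ)/2^i) (2 * Int.fract z) := by
    have h1 := (expansion z).mul_left 2
    apply h1.congr_fun
    intro i
    have : e (i+1) = binDigit z (i+1) := by rw [he]; simp
    rw [this, pow_succ]
    field_simp
  have hB : HasSum (fun i : ℕ => (e i : ℝ)/2^i) (Int.fract z) := by
    have h1 : HasSum (fun i : ℕ => (e (i+1) : ℝ)/2^(i+1)) (Int.fract z) := by
      apply (expansion z).congr_fun
      intro i
      have : e (i+1) = binDigit z (i+1) := by rw [he]; simp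
      rw [this]
    have h2 := (hasSum_nat_add_iff (f := fun i : ℕ => (e i : ℝ)/2^i) 1).mp h1
    simpa [he] using h2
  have hdiff : HasSum (fun i : ℕ => (g i : ℝ)/2^i - (h i : ℝ)/2^i) (Int.fract z) := by
    have := hA.sub hB
    have heq : (2 : ℝ) * Int.fract z - Int.fract z = Int.fract z := by ring
    rw [heq] at this
    apply this.congr_fun
    intro i
    have hk : (g i : ℝ) - h i = (e (i+1) : ℝ) - e i := by
      have h5 : g i - h i = e (i+1) - e i := by
        rcases e01 i with h1|h1 <;> rcases e01 (i+1) with h2|h2 <;>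
          simp [hgdef, hhdef, h1, h2]
      exact_mod_cast congrArg (fun t : ℤ => (t : ℝ)) h5
    rw [div_sub_div_same, div_sub_div_same, hk]
  have hx0y0 : x0 - y0 = Int.fract z := by
    have h1 : HasSum (fun i : ℕ => (g i : ℝ)/2^i - (h i : ℝ)/2^i) (x0 - y0) :=
      (sg.hasSum).sub (sh.hasSum)
    exact h1.unique hdiff
  have key : ∀ (g' : ℕ → ℤ) (w : ℝ), (∀ i, 1 ≤ i → binDigit w i = g' i) →
      (∀ i, 1 ≤ i → g' i = 1 → binDigit z i ≠ binDigit z (i+1)) →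
      Filter.Tendsto (fun n : ℕ => (cnt w n : ℝ)/n) Filter.atTop (nhds 0) := by
    intro g' w hdig himp
    have hle : ∀ n, cnt w n ≤ chg z n := by
      intro n
      apply Finset.card_le_card
      intro i hi
      simp only [Finset.mem_filter, Finset.mem_Icc] at hi ⊢
      obtain ⟨⟨hi1, hi2⟩, hi3⟩ := hi
      rw [hdig i hi1] at hi3
      exact ⟨⟨hi1, hi2⟩, himp i hi1 hi3⟩
    apply tendsto_of_tendsto_of_tendsto_of_le_of_le (tendsto_const_nhds (x := (0:ℝ))) hz
    · intro n; positivity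
    · intro n
      have h2 : (cnt w n : ℝ) ≤ (chg z n : ℝ) := by exact_mod_cast hle n
      have hn : (0:ℝ) ≤ (n:ℝ) := by positivity
      exact div_le_div_of_nonneg_right h2 hn
  refine ⟨x0 + (⌊z⌋ : ℝ), y0, ?_, ?_, ?_⟩
  · apply key g
    · intro i hi
      have h1 : binDigit (x0 + (⌊z⌋:ℝ)) i = binDigit x0 i := by
        unfold binDigit; rw [Int.fract_add_intCast]
      rw [h1, hx0]
      exact binDigit_indicator g01 gcons i hi
    · intro i hi hgi hcon
      have he1 : e i = binDigit z i := by rw [he]; simp [show i ≠ 0 by omega]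
      have he2 : e (i+1) = binDigit z (i+1) := by rw [he]; simp
      have hee : e (i+1) = e i := by rw [he1, he2, hcon]
      rw [hgdef] at hgi
      simp [hee] at hgi
  · apply key h
    · intro i hi
      rw [hy0]
      exact binDigit_indicator h01 hcons i hi
    · intro i hi hhi hcon
      have he1 : e i = binDigit z i := by rw [he]; simp [show i ≠ 0 by omega]
      have he2 : e (i+1) = binDigit z (i+1) := by rw [he]; simp
      have hee : e (i+1) = e i := by rw [he1, he2, hcon]
      rw [hhdef] at hhi
      simp [hee] at hhi
  · have := Int.fract_add_floor z
    linarith [hx0y0, this]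

end BEG

theorem stmt14 : BE10 - BE10 = GSet := by
  ext z
  constructor
  · intro hzin
    rw [Set.mem_sub] at hzin
    obtain ⟨x, hx, y, hy, rfl⟩ := hzin
    exact sub_mem_G x y hx hy
  · intro hzin
    obtain ⟨x, y, hx, hy, hxy⟩ := G_decomp z hzin
    rw [Set.mem_sub]
    exact ⟨x, hx, y, hy, hxy⟩
end
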